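/- arXiv:1105.3952 — 11 statements merged into one kernel-verified Lean document; each statement's English description precedes it below -/
import Mathlib

section
/- Let p be a prime and let Q be a finite p-group acting by automorphisms on a finite group R whose order is coprime to p. If Q contains an elementary abelian subgroup of order p^2 (i.e., a subgroup of order p^2 all of whose elements have order dividing p), then R is generated by the union, over all nontrivial h in Q, of the centralizers C_R(h) = {r in R : h(r) = r}. That is, the subgroup of R generated by {r in R : h(r) = r for some nontrivial h in Q} equals R. -/
open Subgroup Finset Pointwise

section Helpers

variable {E R : Type*} [Group E] [Group R]

/-- Restriction of an automorphism to an invariant subgroup. -/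
def autRestrict (T : Subgroup R) (σ : MulAut R)
    (h : ∀ r ∈ T, σ r ∈ T) (h' : ∀ r ∈ T, σ⁻¹ r ∈ T) : MulAut ↥T where
  toFun t := ⟨σ t, h t t.2⟩
  invFun t := ⟨σ⁻¹ t, h' t t.2⟩
  left_inv t := by ext; simp
  right_inv t := by ext; simp
  map_mul' a b := by ext; simp

/-- Restriction of an action by automorphisms to an invariant subgroup. -/
def actRestrict (ψ : E →* MulAut R) (T : Subgroup R)
    (h : ∀ (e : E), ∀ r ∈ T, ψ e r ∈ T) : E →* MulAut ↥T :=
  MonoidHom.mk' (fun e => autRestrict T (ψ e) (h e) (by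
    intro r hr
    have := h e⁻¹ r hr
    rwa [map_inv] at this)) (by
    intro a b
    apply MulEquiv.ext
    intro t
    ext
    simp [autRestrict])

@[simp] lemma actRestrict_apply (ψ : E →* MulAut R)
    (T : Subgroup R) (h) (e : E) (t : ↥T) : (actRestrict ψ T h e t : R) = ψ e t := rfl

/-- Induced action on the quotient by an invariant normal subgroup. -/
def actQuot (ψ : E →* MulAut R) (M : Subgroup R) [M.Normal]
    (h : ∀ e : E, M.map (ψ e : R ≃* R).toMonoidHom = M) : E →* MulAut (R ⧸ M) :=
  MonoidHom.mk' (fun e => QuotientGroup.congr M M (ψ e) (h e)) (by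
    intro a b
    apply MulEquiv.ext
    intro x
    induction x using QuotientGroup.induction_on with
    | H r => simp [QuotientGroup.congr_mk]; rfl)

@[simp] lemma actQuot_mk (ψ : E →* MulAut R) (M : Subgroup R)
    [M.Normal] (h) (e : E) (r : R) :
    actQuot ψ M h e (QuotientGroup.mk r) = QuotientGroup.mk (ψ e r) := rfl

/-- Fixed points lift along quotients by coprime invariant normal subgroups. -/
lemma fixLift {p : ℕ} (hp : p.Prime) [Finite R]
    (ψ : E →* MulAut R) (M : Subgroup R) [M.Normal]
    (hinv : ∀ e : E, M.map (ψ e : R ≃* R).toMonoidHom = M) (hM : ¬ p ∣ Nat.card M)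
    (e : E) (he : e ^ p = 1) (x : R ⧸ M) (hx : actQuot ψ M hinv e x = x) :
    ∃ r : R, QuotientGroup.mk r = x ∧ ψ e r = r := by
  obtain ⟨r₀, rfl⟩ := QuotientGroup.mk_surjective x
  set x : R ⧸ M := QuotientGroup.mk r₀ with hxdef
  have hstab2 : ∀ g ∈ zpowers e, ∀ r : R, (QuotientGroup.mk r : R ⧸ M) = x →
      (QuotientGroup.mk (ψ g r) : R ⧸ M) = x := by
    rintro g ⟨n, rfl⟩ r hr
    have h1 : actQuot ψ M hinv e ∈ MulAction.stabilizer (MulAut (R ⧸ M)) x := hx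
    have h2 : (actQuot ψ M hinv e) ^ n ∈ MulAction.stabilizer (MulAut (R ⧸ M)) x :=
      zpow_mem h1 n
    have h3 : actQuot ψ M hinv (e ^ n) x = x := by
      rw [map_zpow]
      exact h2
    calc (QuotientGroup.mk (ψ (e ^ n) r) : R ⧸ M)
        = actQuot ψ M hinv (e ^ n) (QuotientGroup.mk r) := rfl
      _ = actQuot ψ M hinv (e ^ n) x := by rw [hr]
      _ = x := h3
  set X := {r : R // (QuotientGroup.mk r : R ⧸ M) = x}
  letI : MulAction ↥(zpowers e) X :=
    { smul := fun g r => ⟨ψ (g : E) (r : R), hstab2 g g.2 r r.2⟩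
      one_smul := fun r => by
        ext
        show ψ ((1 : ↥(zpowers e)) : E) (r : R) = (r : R)
        simp
      mul_smul := fun g h r => by
        ext
        show ψ ((g * h : ↥(zpowers e)) : E) (r : R) = ψ (g : E) (ψ (h : E) (r : R))
        simp }
  have hsmul : ∀ (g : ↥(zpowers e)) (r : X), ((g • r : X) : R) = ψ (g : E) (r : R) :=
    fun _ _ => rfl
  have hHp : IsPGroup p ↥(zpowers e) := by
    intro g
    refine ⟨1, ?_⟩
    obtain ⟨n, hn⟩ := g.2
    ext
    push_cast
    rw [pow_one, ← hn, ← zpow_natCast, ← zpow_mul, mul_comm, zpow_mul, zpow_natCast, he,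
      one_zpow]
  have hcardX : Nat.card X = Nat.card M := by
    refine Nat.card_congr ⟨fun r => ⟨r₀⁻¹ * (r : R), (QuotientGroup.eq).mp r.2.symm⟩,
      fun m => ⟨r₀ * (m : R), QuotientGroup.mk_mul_of_mem r₀ m.2⟩, fun r => by ext; group,
      fun m => by ext; group⟩
  haveI := Fact.mk hp
  obtain ⟨r, hr⟩ := hHp.nonempty_fixed_point_of_prime_not_dvd_card X (by rwa [hcardX])
  rw [MulAction.mem_fixedPoints] at hr
  have := hr ⟨e, mem_zpowers e⟩
  rw [Subtype.ext_iff, hsmul] at this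
  exact ⟨(r : R), r.2, this⟩

end Helpers

lemma sub_eq_of_le_card {G : Type*} [Group G] [Finite G] {H K : Subgroup G} (h : H ≤ K)
    (hc : Nat.card K ≤ Nat.card H) : H = K := by
  apply SetLike.coe_injective
  refine Set.eq_of_subset_of_ncard_le h ?_ (Set.toFinite _)
  rwa [← Nat.card_coe_set_eq, ← Nat.card_coe_set_eq]

/-- The key counting lemma: a group of order `p ^ 2` and exponent `p` cannot act
fixed-point-freely (for all its nontrivial elements simultaneously) on a nontrivial
abelian group of order coprime to `p`. -/
lemma lemma1 {p : ℕ} (hp : p.Prime) {E R : Type*} [Group E] [Finite E] [CommGroup R] [Finite R]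
    (hcardE : Nat.card E = p ^ 2) (hexp : ∀ x : E, x ^ p = 1)
    (hcop : (Nat.card R).Coprime p) (ψ : E →* MulAut R)
    (hfpf : ∀ e : E, e ≠ 1 → ∀ r : R, ψ e r = r → r = 1) (r : R) : r = 1 := by
  classical
  letI := Fintype.ofFinite E
  have hcardE' : Fintype.card E = p ^ 2 := by rw [← Nat.card_eq_fintype_card, hcardE]
  have hp1 : 1 < p := hp.one_lt
  have hnontriv : Nontrivial E := by
    rw [← Finite.one_lt_card_iff_nontrivial, hcardE]
    exact one_lt_pow₀ hp1 two_ne_zero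
  have horder : ∀ e : E, e ≠ 1 → orderOf e = p := by
    intro e he
    rcases (Nat.Prime.eq_one_or_self_of_dvd hp _ (orderOf_dvd_of_pow_eq_one (hexp e))) with h | h
    · exact absurd (orderOf_eq_one_iff.mp h) he
    · exact h
  set P : R := ∏ g : E, ψ g r with hP
  have hPfix : ∀ g : E, ψ g P = P := by
    intro g
    rw [hP, map_prod]
    calc (∏ e : E, ψ g (ψ e r)) = ∏ e : E, ψ (g * e) r := by
          refine Finset.prod_congr rfl fun e _ => ?_
          rw [map_mul]; rfl
      _ = ∏ e : E, ψ e r :=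
          Fintype.prod_equiv (Equiv.mulLeft g) (fun x => ψ (g * x) r) (fun y => ψ y r)
            (fun x => rfl)
  obtain ⟨g₀, hg₀⟩ := exists_ne (1 : E)
  have hP1 : P = 1 := hfpf g₀ hg₀ P (hPfix g₀)
  have hnorm : ∀ c : E, c ≠ 1 → (∏ i ∈ range p, ψ (c ^ i) r) = 1 := by
    intro c hc
    set N : R := ∏ i ∈ range p, ψ (c ^ i) r with hN
    refine hfpf c hc N ?_
    have h1 : ψ c N = ∏ i ∈ range p, ψ (c ^ (i + 1)) r := by
      rw [hN, map_prod]
      refine Finset.prod_congr rfl fun i _ => ?_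
      have : c * c ^ i = c ^ (i + 1) := by
        rw [pow_succ]
        exact (Commute.pow_self c i).symm.eq ▸ rfl
      rw [← this, map_mul]; rfl
    have h2 : (∏ i ∈ range p, ψ (c ^ (i + 1)) r) * ψ (c ^ 0) r
        = (∏ i ∈ range p, ψ (c ^ i) r) * ψ (c ^ p) r := by
      rw [← Finset.prod_range_succ' (fun i => ψ (c ^ i) r) p, Finset.prod_range_succ]
    rw [hexp c, pow_zero] at h2
    rw [h1]
    exact mul_right_cancel h2
  -- the "lines" (subgroups of order p)
  set D : Finset E := Finset.univ.erase 1 with hD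
  set L : Finset (Subgroup E) := D.image (fun g => zpowers g) with hL
  have hmaps : ∀ g ∈ D, zpowers g ∈ L := fun g hg => Finset.mem_image_of_mem _ hg
  have hfiber : ∀ Z ∈ L, D.filter (fun g => zpowers g = Z) =
      (Finset.univ.filter (fun g => g ∈ Z)).erase 1 := by
    intro Z hZ
    obtain ⟨c, hcD, hcZ⟩ := Finset.mem_image.mp hZ
    have hc1 : c ≠ 1 := (Finset.mem_erase.mp hcD).1
    ext g
    simp only [Finset.mem_filter, Finset.mem_erase, hD, Finset.mem_univ, true_and, and_true]
    constructor
    · rintro ⟨hg1, hgZ⟩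
      exact ⟨hg1, hgZ ▸ mem_zpowers g⟩
    · rintro ⟨hg1, hgZ⟩
      refine ⟨hg1, ?_⟩
      rw [← hcZ] at hgZ ⊢
      refine sub_eq_of_le_card ((zpowers_le).mpr hgZ) ?_
      rw [Nat.card_zpowers, Nat.card_zpowers, horder c hc1, horder g hg1]
  have hZcard : ∀ Z ∈ L, (Finset.univ.filter (fun g => g ∈ Z)).card = p := by
    intro Z hZ
    obtain ⟨c, hcD, hcZ⟩ := Finset.mem_image.mp hZ
    have hc1 : c ≠ 1 := (Finset.mem_erase.mp hcD).1
    rw [← Fintype.card_subtype, ← Nat.card_eq_fintype_card]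
    show Nat.card Z = p
    rw [← hcZ, Nat.card_zpowers, horder c hc1]
  have hfibprod : ∀ Z ∈ L, (∏ g ∈ D.filter (fun g => zpowers g = Z), ψ g r) = r⁻¹ := by
    intro Z hZ
    obtain ⟨c, hcD, hcZ⟩ := Finset.mem_image.mp hZ
    have hc1 : c ≠ 1 := (Finset.mem_erase.mp hcD).1
    have hcmem : c ∈ Z := hcZ ▸ mem_zpowers c
    have hinj : Set.InjOn (fun i => c ^ i) (range (orderOf c)) := by
      intro a ha b hb hab
      exact pow_injOn_Iio_orderOf (by simpa using ha) (by simpa using hb) hab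
    have himage : Finset.image (fun i => c ^ i) (range (orderOf c))
        = Finset.univ.filter (fun g => g ∈ Z) := by
      apply Finset.eq_of_subset_of_card_le
      · intro g hg
        obtain ⟨i, _, rfl⟩ := Finset.mem_image.mp hg
        simp [Z.pow_mem hcmem]
      · rw [Finset.card_image_of_injOn hinj, Finset.card_range, hZcard Z hZ, horder c hc1]
    have hall : (∏ g ∈ Finset.univ.filter (fun g => g ∈ Z), ψ g r) = 1 := by
      rw [← himage, Finset.prod_image (fun a ha b hb => hinj ha hb), horder c hc1]
      exact hnorm c hc1
    have h1mem : (1 : E) ∈ Finset.univ.filter (fun g => g ∈ Z) := by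
      simp [Subgroup.one_mem]
    have hsplit := Finset.mul_prod_erase _ (fun g => ψ g r) h1mem
    rw [hall] at hsplit
    rw [hfiber Z hZ]
    simp only [map_one, MulAut.one_apply] at hsplit
    exact eq_inv_of_mul_eq_one_right (by rw [mul_comm] at hsplit ⊢; exact hsplit)
  have hDcard : D.card = p ^ 2 - 1 := by
    rw [hD, Finset.card_erase_of_mem (Finset.mem_univ 1), Finset.card_univ, hcardE']
  have hsum : D.card = ∑ Z ∈ L, (D.filter (fun g => zpowers g = Z)).card :=
    Finset.card_eq_sum_card_fiberwise hmaps
  have hfibcard : ∀ Z ∈ L, (D.filter (fun g => zpowers g = Z)).card = p - 1 := by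
    intro Z hZ
    rw [hfiber Z hZ, Finset.card_erase_of_mem, hZcard Z hZ]
    simp [Subgroup.one_mem]
  have hLcard : L.card = p + 1 := by
    have hstep : p ^ 2 - 1 = L.card * (p - 1) := by
      rw [← hDcard, hsum, Finset.sum_congr rfl hfibcard, Finset.sum_const, smul_eq_mul]
    have h2 : (p + 1) * (p - 1) = p ^ 2 - 1 := by
      obtain ⟨k, rfl⟩ : ∃ k, p = k + 1 := ⟨p - 1, by omega⟩
      have e1 : (k + 1) ^ 2 = k * k + 2 * k + 1 := by ring
      rw [Nat.add_sub_cancel, e1, Nat.add_sub_cancel]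
      ring
    exact Nat.eq_of_mul_eq_mul_right (show 0 < p - 1 by omega) (by rw [h2, hstep])
  have hQ : (∏ g ∈ D, ψ g r) = (r⁻¹) ^ (p + 1) := by
    rw [← Finset.prod_fiberwise_of_maps_to hmaps (fun g => ψ g r),
      Finset.prod_congr rfl hfibprod, Finset.prod_const, hLcard]
  have hPQ : P = r * (r⁻¹) ^ (p + 1) := by
    rw [hP, ← Finset.mul_prod_erase _ (fun g => ψ g r) (Finset.mem_univ (1 : E)), ← hD, hQ]
    simp
  rw [hP1] at hPQ
  have hrp : r ^ p = 1 := by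
    have : r * (r⁻¹) ^ (p + 1) = (r ^ p)⁻¹ := by
      rw [inv_pow, pow_succ]
      group
    rw [this] at hPQ
    rw [← inv_inv (r ^ p), ← hPQ, inv_one]
  have hord : orderOf r ∣ Nat.gcd (Nat.card R) p :=
    Nat.dvd_gcd (orderOf_dvd_natCard r) (orderOf_dvd_of_pow_eq_one hrp)
  rw [Nat.Coprime.gcd_eq_one hcop] at hord
  exact orderOf_eq_one_iff.mp (Nat.dvd_one.mp hord)

universe u

theorem mainAux {p : ℕ} (hp : p.Prime) {E : Type*} [Group E] [Finite E]
    (hcardE : Nat.card E = p ^ 2) (hexp : ∀ x : E, x ^ p = 1) :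
    ∀ (n : ℕ) (R : Type u) [Group R] [Finite R] (ψ : E →* MulAut R),
      Nat.card R = n → (Nat.card R).Coprime p →
      Subgroup.closure {r : R | ∃ e : E, e ≠ 1 ∧ ψ e r = r} = ⊤ := by
  intro n
  induction n using Nat.strong_induction_on with
  | _ n IH =>
  intro R _ _ ψ hn hcop
  classical
  haveI := Fact.mk hp
  set S := {r : R | ∃ e : E, e ≠ 1 ∧ ψ e r = r} with hSdef
  set N := Subgroup.closure S with hNdef
  rcases eq_or_ne (Nat.card R) 1 with h1 | h1
  · rw [eq_top_iff]
    intro x _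
    haveI : Subsingleton R := (Nat.card_eq_one_iff_unique.mp h1).1
    rw [Subsingleton.elim x 1]
    exact one_mem N
  have hcardpos : 0 < Nat.card R := Nat.card_pos
  -- invariant proper subgroups are contained in N
  have hinvle : ∀ T : Subgroup R, (∀ e : E, ∀ r ∈ T, ψ e r ∈ T) → T ≠ ⊤ → T ≤ N := by
    intro T hTinv hTne
    have hcardT : Nat.card T ∣ Nat.card R := Subgroup.card_subgroup_dvd_card T
    have hlt : Nat.card T < n := by
      rw [← hn]
      refine lt_of_le_of_ne (Nat.le_of_dvd hcardpos hcardT) ?_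
      intro heq
      exact hTne (Subgroup.eq_top_of_card_eq T heq)
    have hcop' : (Nat.card T).Coprime p := Nat.Coprime.coprime_dvd_left hcardT hcop
    have hres := IH _ hlt ↥T (actRestrict ψ T hTinv) rfl hcop'
    intro t ht
    have hmem : (⟨t, ht⟩ : ↥T) ∈
        Subgroup.closure {x : ↥T | ∃ e : E, e ≠ 1 ∧ actRestrict ψ T hTinv e x = x} := by
      rw [hres]; trivial
    have hmap : t ∈ Subgroup.map T.subtype
        (Subgroup.closure {x : ↥T | ∃ e : E, e ≠ 1 ∧ actRestrict ψ T hTinv e x = x}) :=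
      ⟨⟨t, ht⟩, hmem, rfl⟩
    rw [MonoidHom.map_closure] at hmap
    refine Subgroup.closure_mono ?_ hmap
    rintro x ⟨⟨x', hx'⟩, ⟨e, he, hfix⟩, rfl⟩
    refine ⟨e, he, ?_⟩
    have := congrArg (T.subtype) hfix
    simpa using this
  -- the quotient argument
  have hquot : ∀ M : Subgroup R, M.Normal → (∀ e : E, ∀ r ∈ M, ψ e r ∈ M) →
      M ≠ ⊥ → M ≠ ⊤ → N = ⊤ := by
    intro M hMnorm hMinv hMbot hMtop
    haveI := hMnorm
    have hMle : M ≤ N := hinvle M hMinv hMtop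
    have hmapinv : ∀ e : E, M.map (ψ e : R ≃* R).toMonoidHom = M := by
      intro e
      apply le_antisymm
      · rintro _ ⟨r, hr, rfl⟩
        exact hMinv e r hr
      · intro r hr
        refine ⟨ψ e⁻¹ r, hMinv e⁻¹ r hr, ?_⟩
        simp [map_inv]
    set ψ' := actQuot ψ M hmapinv with hψ'
    have hM1 : 1 < Nat.card M := by
      have hpos : 0 < Nat.card M := Nat.card_pos
      rcases Nat.lt_or_ge (Nat.card M) 2 with h | h
      · have : Nat.card M = 1 := by omega
        exact absurd (Subgroup.card_eq_one.mp this) hMbot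
      · omega
    have hprod := Subgroup.card_eq_card_quotient_mul_card_subgroup M
    have hcardQ : Nat.card (R ⧸ M) < n := by
      rw [← hn, hprod]
      have hqpos : 0 < Nat.card (R ⧸ M) := Nat.card_pos
      calc Nat.card (R ⧸ M) = Nat.card (R ⧸ M) * 1 := (mul_one _).symm
        _ < Nat.card (R ⧸ M) * Nat.card M := Nat.mul_lt_mul_of_pos_left hM1 hqpos
    have hdvdQ : Nat.card (R ⧸ M) ∣ Nat.card R := ⟨Nat.card M, hprod⟩
    have hcopQ : (Nat.card (R ⧸ M)).Coprime p := Nat.Coprime.coprime_dvd_left hdvdQ hcop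
    have hresQ := IH _ hcardQ (R ⧸ M) ψ' rfl hcopQ
    have hpM : ¬ p ∣ Nat.card M := by
      intro hdvd
      have h2 : p ∣ Nat.card R := hdvd.trans (Subgroup.card_subgroup_dvd_card M)
      have h3 := Nat.dvd_gcd h2 (dvd_refl p)
      rw [Nat.Coprime.gcd_eq_one hcop] at h3
      exact hp.one_lt.ne' (Nat.dvd_one.mp h3)
    have hsub : {x : R ⧸ M | ∃ e : E, e ≠ 1 ∧ ψ' e x = x} ⊆
        ((N.map (QuotientGroup.mk' M) : Subgroup (R ⧸ M)) : Set (R ⧸ M)) := by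
      rintro x ⟨e, he, hex⟩
      obtain ⟨r, hrx, hrfix⟩ := fixLift hp ψ M hmapinv hpM e (hexp e) x hex
      exact ⟨r, Subgroup.subset_closure ⟨e, he, hrfix⟩, hrx⟩
    have htop2 : N.map (QuotientGroup.mk' M) = ⊤ := by
      rw [eq_top_iff, ← hresQ]
      exact (Subgroup.closure_le _).mpr hsub
    have hcm := Subgroup.comap_map_eq (QuotientGroup.mk' M) N
    rw [htop2, QuotientGroup.ker_mk', Subgroup.comap_top] at hcm
    exact (hcm.trans (sup_eq_left.mpr hMle)).symm
  -- action instances, to speak about invariant Sylow subgroups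
  letI : SMul E R := ⟨fun e r => ψ e r⟩
  have hsmul_def : ∀ (e : E) (r : R), e • r = ψ e r := fun _ _ => rfl
  letI : MulAction E R :=
    { one_smul := fun r => by rw [hsmul_def]; simp
      mul_smul := fun a b r => by rw [hsmul_def, hsmul_def, hsmul_def, map_mul]; rfl }
  letI : MulDistribMulAction E R :=
    { smul_mul := fun e r s => by rw [hsmul_def, hsmul_def, hsmul_def]; simp
      smul_one := fun e => by rw [hsmul_def]; simp }
  have hEp : IsPGroup p E := fun e => ⟨1, by rw [pow_one]; exact hexp e⟩
  have hsylow : ∀ q : ℕ, q.Prime → q ∣ Nat.card R → ∃ T : Subgroup R,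
      Nat.card T = q ^ (Nat.card R).factorization q ∧ (∀ e : E, ∀ r ∈ T, ψ e r ∈ T) := by
    intro q hq hqdvd
    haveI := Fact.mk hq
    have hndvd : ¬ p ∣ Nat.card (Sylow q R) := by
      intro hdvd
      obtain ⟨P₀⟩ := (inferInstance : Nonempty (Sylow q R))
      have h2 : Nat.card (Sylow q R) ∣ Nat.card R :=
        (Sylow.card_dvd_index P₀).trans (Subgroup.index_dvd_card _)
      have h3 : p ∣ Nat.card R := hdvd.trans h2
      have h4 := Nat.dvd_gcd h3 (dvd_refl p)
      rw [Nat.Coprime.gcd_eq_one hcop] at h4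
      exact hp.one_lt.ne' (Nat.dvd_one.mp h4)
    obtain ⟨P, hP⟩ := hEp.nonempty_fixed_point_of_prime_not_dvd_card (Sylow q R) hndvd
    rw [MulAction.mem_fixedPoints] at hP
    refine ⟨P.toSubgroup, P.card_eq_multiplicity, ?_⟩
    intro e r hr
    have hone : e • P = P := hP e
    have h3 : e • r ∈ e • (P : Subgroup R) := Subgroup.smul_mem_pointwise_smul r e _ hr
    rw [← Sylow.pointwise_smul_def, hone] at h3
    rw [← hsmul_def]
    exact h3
  by_cases hpp : ∃ (q : ℕ) (k : ℕ), q.Prime ∧ Nat.card R = q ^ k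
  · -- prime power case
    obtain ⟨q, k, hq, hcardq⟩ := hpp
    have hRq : IsPGroup q R := IsPGroup.of_card hcardq
    haveI := Fact.mk hq
    haveI : Nontrivial R := by
      rw [← Finite.one_lt_card_iff_nontrivial]
      omega
    set Z := Subgroup.center R with hZ
    have hZinv : ∀ e : E, ∀ r ∈ Z, ψ e r ∈ Z := by
      intro e r hr
      rw [Subgroup.mem_center_iff] at hr ⊢
      intro g
      have hg : g = ψ e ((ψ e).symm g) := by simp
      rw [hg, ← map_mul, ← map_mul, hr]
    have hZbot : Z ≠ ⊥ := by
      have := hRq.center_nontrivial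
      exact (Subgroup.nontrivial_iff_ne_bot Z).mp this
    by_cases hZtop : Z = ⊤
    · -- R is abelian
      have hab : ∀ x y : R, x * y = y * x := by
        intro x y
        have hy : x ∈ Subgroup.center R := by rw [← hZ, hZtop]; trivial
        exact (Subgroup.mem_center_iff.mp hy y).symm
      have hEcomm : ∀ a b : E, a * b = b * a :=
        IsPGroup.commutative_of_card_eq_prime_sq hcardE
      by_cases hex : ∃ e : E, e ≠ 1 ∧ ∃ r : R, ψ e r = r ∧ r ≠ 1
      · obtain ⟨e, he, r, hrfix, hr1⟩ := hex
        set M : Subgroup R := MonoidHom.eqLocus ((ψ e : R ≃* R) : R →* R) (MonoidHom.id R)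
          with hM
        have hMmem : ∀ x : R, x ∈ M ↔ ψ e x = x := fun x => Iff.rfl
        have hMnorm : M.Normal := by
          constructor
          intro a ha g
          rw [hMmem] at ha ⊢
          have hconj : g * a * g⁻¹ = a := by
            rw [hab g a, mul_assoc, mul_inv_cancel, mul_one]
          rw [hconj]
          exact ha
        have hMinv : ∀ f : E, ∀ x ∈ M, ψ f x ∈ M := by
          intro f x hx
          rw [hMmem] at hx ⊢
          calc ψ e (ψ f x) = ψ (e * f) x := by rw [map_mul]; rfl
            _ = ψ (f * e) x := by rw [hEcomm]
            _ = ψ f (ψ e x) := by rw [map_mul]; rfl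
            _ = ψ f x := by rw [hx]
        have hMbot : M ≠ ⊥ := by
          intro hbot
          have : r ∈ M := (hMmem r).mpr hrfix
          rw [hbot, Subgroup.mem_bot] at this
          exact hr1 this
        by_cases hMtop2 : M = ⊤
        · rw [eq_top_iff]
          intro x _
          exact Subgroup.subset_closure ⟨e, he, (hMmem x).mp (hMtop2 ▸ Subgroup.mem_top x)⟩
        · exact hquot M hMnorm hMinv hMbot hMtop2
      · -- fixed point free action: contradiction with lemma1
        push_neg at hex
        letI : CommGroup R := { (inferInstance : Group R) with mul_comm := hab }
        have hall : ∀ r : R, r = 1 := by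
          intro r
          refine lemma1 hp hcardE hexp hcop ψ ?_ r
          intro f hf s hfix
          exact hex f hf s hfix
        have : Nat.card R = 1 := by
          refine Nat.card_eq_one_iff_unique.mpr ⟨⟨fun a b => by rw [hall a, hall b]⟩, ⟨1⟩⟩
        exact absurd this h1
    · exact hquot Z inferInstance hZinv hZbot hZtop
  · -- not a prime power : Sylow generation
    push_neg at hpp
    have hSle : ∀ q ∈ (Nat.card R).primeFactors,
        q ^ (Nat.card R).factorization q ∣ Nat.card N := by
      intro q hqf
      have hq := Nat.prime_of_mem_primeFactors hqf
      obtain ⟨T, hTcard, hTinv⟩ := hsylow q hq (Nat.dvd_of_mem_primeFactors hqf)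
      have hTne : T ≠ ⊤ := by
        intro htop
        have hcc : Nat.card T = Nat.card R := by rw [htop]; exact Subgroup.card_top
        exact hpp q ((Nat.card R).factorization q) hq (by rw [← hTcard, hcc])
      have hle : T ≤ N := hinvle T hTinv hTne
      rw [← hTcard]
      exact Subgroup.card_dvd_of_le hle
    have hNpos : Nat.card N ≠ 0 := Nat.card_pos.ne'
    have hdvd : Nat.card R ∣ Nat.card N := by
      rw [← Nat.factorization_le_iff_dvd hcardpos.ne' hNpos]
      · rw [Finsupp.le_iff]
        intro q hq
        rw [Nat.support_factorization] at hq
        have := hSle q hq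
        exact (Nat.Prime.pow_dvd_iff_le_factorization
          (Nat.prime_of_mem_primeFactors hq) hNpos).mp this
    have hNR := Nat.dvd_antisymm hdvd (Subgroup.card_subgroup_dvd_card N)
    exact Subgroup.eq_top_of_card_eq N hNR.symm

/-- Lemma 3.5 (Lemma `Lbob`): if a finite `p`-group `Q` containing an elementary abelian
subgroup of order `p ^ 2` acts by automorphisms on a finite group `R` of order coprime to
`p`, then `R` is generated by the centralizers (fixed-point subgroups) of the nontrivial
elements of `Q`. -/
theorem stmt0 {p : ℕ} (hp : p.Prime) {Q R : Type*} [Group Q] [Finite Q]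
    [Group R] [Finite R]
    (hQ : IsPGroup p Q) (hcop : (Nat.card R).Coprime p)
    (φ : Q →* MulAut R)
    (hE : ∃ E : Subgroup Q, Nat.card E = p ^ 2 ∧ ∀ x ∈ E, x ^ p = 1) :
    Subgroup.closure {r : R | ∃ g : Q, g ≠ 1 ∧ φ g r = r} = ⊤ := by
  obtain ⟨E, hEcard, hEexp⟩ := hE
  have hexp : ∀ x : ↥E, x ^ p = 1 := by
    intro x
    ext
    push_cast
    exact hEexp x x.2
  have hmain := mainAux hp hEcard hexp (Nat.card R) R (φ.comp E.subtype) rfl hcop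
  rw [eq_top_iff, ← hmain]
  apply Subgroup.closure_mono
  rintro r ⟨e, he, hfix⟩
  refine ⟨(e : Q), ?_, hfix⟩
  intro hcontra
  apply he
  ext
  simpa using hcontra
end

section
/- Let A be a finite group, p a prime, and Q a Sylow p-subgroup of A which is a TI subgroup of A and which contains an elementary abelian subgroup of order p^2. Then every normal subgroup R of A whose order is coprime to p is centralized by Q, i.e., R is contained in the centralizer C_A(Q) (equivalently, every element of R commutes with every element of Q). -/
open Subgroup
section Aux
variable {E : Type*} [Group E] {R : Type*} [Group R]

/-- The subgroup of points fixed by every automorphism in the range of `φ`. -/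
def fixedSub (φ : E →* MulAut R) : Subgroup R where
  carrier := {r | ∀ e, φ e r = r}
  one_mem' := fun e => map_one (φ e)
  mul_mem' := by intro a b ha hb e; rw [map_mul, ha e, hb e]
  inv_mem' := by intro a ha e; rw [map_inv, ha e]

@[simp] lemma mem_fixedSub {φ : E →* MulAut R} {r : R} : r ∈ fixedSub φ ↔ ∀ e, φ e r = r := Iff.rfl

/-- Restrict an action by automorphisms to an invariant subgroup. -/
def restrictAut (φ : E →* MulAut R) (S : Subgroup R) (h : ∀ e : E, ∀ s ∈ S, φ e s ∈ S) :
    E →* MulAut ↥S where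
  toFun e :=
    { toFun := fun s => ⟨φ e s, h e s s.2⟩
      invFun := fun s => ⟨φ e⁻¹ s, h e⁻¹ s s.2⟩
      left_inv := fun s => Subtype.ext (by
        show φ e⁻¹ (φ e s) = s
        rw [← MulAut.mul_apply, ← map_mul, inv_mul_cancel, map_one, MulAut.one_apply])
      right_inv := fun s => Subtype.ext (by
        show φ e (φ e⁻¹ s) = s
        rw [← MulAut.mul_apply, ← map_mul, mul_inv_cancel, map_one, MulAut.one_apply])
      map_mul' := fun a b => Subtype.ext (by
        show φ e ((a : R) * (b : R)) = φ e (a : R) * φ e (b : R)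
        exact map_mul _ _ _) }
  map_one' := by ext s; show φ 1 (s : R) = (s : R); rw [map_one, MulAut.one_apply]
  map_mul' := by
    intro a b; ext s
    show φ (a * b) (s : R) = φ a (φ b (s : R))
    rw [map_mul, MulAut.mul_apply]

@[simp] lemma restrictAut_apply (φ : E →* MulAut R) (S : Subgroup R)
    (h : ∀ e : E, ∀ s ∈ S, φ e s ∈ S) (e : E) (s : ↥S) :
    (restrictAut φ S h e s : R) = φ e s := rfl

/-- Descend a single automorphism to the quotient by a pointwise-fixed normal subgroup. -/
def quotAutOne (σ : MulAut R) (N : Subgroup R) [N.Normal]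
    (h1 : ∀ n ∈ N, σ n = n) (h2 : ∀ n ∈ N, σ⁻¹ n = n) : MulAut (R ⧸ N) :=
  have hle1 : N ≤ N.comap (σ : MulAut R).toMonoidHom :=
    fun n hn => by rw [Subgroup.mem_comap]; show σ n ∈ N; rw [h1 n hn]; exact hn
  have hle2 : N ≤ N.comap (σ⁻¹ : MulAut R).toMonoidHom :=
    fun n hn => by rw [Subgroup.mem_comap]; show σ⁻¹ n ∈ N; rw [h2 n hn]; exact hn
  { toFun := QuotientGroup.map N N (σ : MulAut R).toMonoidHom hle1
    invFun := QuotientGroup.map N N (σ⁻¹ : MulAut R).toMonoidHom hle2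
    map_mul' := (QuotientGroup.map N N (σ : MulAut R).toMonoidHom hle1).map_mul
    left_inv := fun q => QuotientGroup.induction_on q (fun r => by
      rw [QuotientGroup.map_mk, QuotientGroup.map_mk]
      show (QuotientGroup.mk (σ⁻¹ (σ r)) : R ⧸ N) = _
      rw [← MulAut.mul_apply, inv_mul_cancel, MulAut.one_apply])
    right_inv := fun q => QuotientGroup.induction_on q (fun r => by
      rw [QuotientGroup.map_mk, QuotientGroup.map_mk]
      show (QuotientGroup.mk (σ (σ⁻¹ r)) : R ⧸ N) = _
      rw [← MulAut.mul_apply, mul_inv_cancel, MulAut.one_apply]) }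

@[simp] lemma quotAutOne_mk (σ : MulAut R) (N : Subgroup R) [N.Normal]
    (h1 : ∀ n ∈ N, σ n = n) (h2 : ∀ n ∈ N, σ⁻¹ n = n) (r : R) :
    quotAutOne σ N h1 h2 (QuotientGroup.mk r) = QuotientGroup.mk (σ r) := rfl

/-- Descend an action by automorphisms to the quotient by a pointwise-fixed normal subgroup. -/
def quotAut (φ : E →* MulAut R) (N : Subgroup R) [N.Normal]
    (h : ∀ e : E, ∀ n ∈ N, φ e n = n) : E →* MulAut (R ⧸ N) :=
  MonoidHom.mk' (fun e => quotAutOne (φ e) N (h e)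
      (fun n hn => by rw [← map_inv]; exact h e⁻¹ n hn))
    (by
      intro a b
      refine MulEquiv.ext fun q => QuotientGroup.induction_on q (fun r => ?_)
      rw [MulAut.mul_apply, quotAutOne_mk, quotAutOne_mk, quotAutOne_mk, map_mul,
        MulAut.mul_apply])

@[simp] lemma quotAut_mk (φ : E →* MulAut R) (N : Subgroup R) [N.Normal]
    (h : ∀ e : E, ∀ n ∈ N, φ e n = n) (e : E) (r : R) :
    quotAut φ N h e (QuotientGroup.mk r) = QuotientGroup.mk (φ e r) := rfl

end Aux

/-- A `p`-group acting on a type of cardinality prime to `p` has a fixed point. -/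
lemma helperA {p : ℕ} (hp : p.Prime) {P X : Type*} [Group P] [Finite P] (hP : IsPGroup p P)
    [MulAction P X] [Finite X] (h : ¬ p ∣ Nat.card X) : ∃ x : X, ∀ g : P, g • x = x := by
  haveI := Fact.mk hp
  obtain ⟨x, hx⟩ := hP.nonempty_fixed_point_of_prime_not_dvd_card X h
  exact ⟨x, fun g => hx g⟩

/-- Coprime lifting of fixed points: if `e` fixes the coset of `x` modulo a pointwise-fixed
normal subgroup `N`, then some element of that coset is fixed by `e`. -/
lemma coset_fix {p : ℕ} (hp : p.Prime) {E R : Type*} [Group E] [Finite E] [Group R] [Finite R]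
    (hEp : IsPGroup p E) (hcop : (Nat.card R).Coprime p) (φ : E →* MulAut R)
    {N : Subgroup R} [N.Normal] (h : ∀ e : E, ∀ n ∈ N, φ e n = n) (e : E) (x : R)
    (he : (QuotientGroup.mk (φ e x) : R ⧸ N) = QuotientGroup.mk x) :
    ∃ r : R, (QuotientGroup.mk r : R ⧸ N) = QuotientGroup.mk x ∧ φ e r = r := by
  have hcong : ∀ (g : E) (r r' : R), (QuotientGroup.mk r : R ⧸ N) = QuotientGroup.mk r' →
      (QuotientGroup.mk (φ g r) : R ⧸ N) = QuotientGroup.mk (φ g r') := by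
    intro g r r' hrr
    rw [QuotientGroup.eq] at hrr ⊢
    rw [← map_inv, ← map_mul, h g _ hrr]
    exact hrr
  let St : Subgroup E :=
    { carrier := {g | (QuotientGroup.mk (φ g x) : R ⧸ N) = QuotientGroup.mk x}
      one_mem' := by show (QuotientGroup.mk (φ 1 x) : R ⧸ N) = QuotientGroup.mk x; rw [map_one, MulAut.one_apply]
      mul_mem' := by
        intro a b ha hb
        show (QuotientGroup.mk (φ (a * b) x) : R ⧸ N) = QuotientGroup.mk x
        rw [map_mul, MulAut.mul_apply]
        exact (hcong a _ _ hb).trans ha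
      inv_mem' := by
        intro a ha
        show (QuotientGroup.mk (φ a⁻¹ x) : R ⧸ N) = QuotientGroup.mk x
        have h2 := hcong a⁻¹ _ _ ha
        rw [← MulAut.mul_apply, ← map_mul, inv_mul_cancel, map_one, MulAut.one_apply] at h2
        exact h2.symm }
  let X := {r : R // (QuotientGroup.mk r : R ⧸ N) = QuotientGroup.mk x}
  letI : MulAction ↥St X :=
    { smul := fun g r => ⟨φ (g : E) (r : R), (hcong (g : E) r x r.2).trans g.2⟩
      one_smul := fun r => Subtype.ext (by
        show φ ((1 : ↥St) : E) (r : R) = (r : R)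
        rw [Subgroup.coe_one, map_one, MulAut.one_apply])
      mul_smul := fun a b r => Subtype.ext (by
        show φ ((a * b : ↥St) : E) (r : R) = φ (a : E) (φ (b : E) (r : R))
        rw [Subgroup.coe_mul, map_mul, MulAut.mul_apply]) }
  have hcardX : Nat.card X = Nat.card ↥N := by
    refine Nat.card_congr ⟨fun r => ⟨x⁻¹ * r, ?_⟩, fun n => ⟨x * n, ?_⟩, fun r => ?_, fun n => ?_⟩
    · have h0 := QuotientGroup.eq.mp r.2
      simpa [mul_inv_rev] using N.inv_mem h0
    · rw [QuotientGroup.eq]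
      simpa [mul_inv_rev, mul_assoc] using N.inv_mem n.2
    · exact Subtype.ext (by simp)
    · exact Subtype.ext (by simp)
  have hpX : ¬ p ∣ Nat.card X := by
    intro hdvd
    rw [hcardX] at hdvd
    have : p ∣ Nat.card R := hdvd.trans (Subgroup.card_subgroup_dvd_card N)
    have h1 : p ∣ 1 := hcop ▸ Nat.dvd_gcd this dvd_rfl
    exact hp.one_lt.ne' (Nat.eq_one_of_dvd_one h1)
  obtain ⟨r, hr⟩ := helperA hp (hEp.to_subgroup St) hpX
  refine ⟨(r : R), r.2, ?_⟩
  have := hr ⟨e, he⟩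
  exact Subtype.ext_iff.mp this

/-- The abelian case of the main claim: a `p²`-group of exponent `p` acting on a finite abelian
group of coprime order, such that any point fixed by one nontrivial element is fixed by all,
acts trivially. -/
lemma claim_comm {p : ℕ} (hp : p.Prime) {E : Type*} [Group E] [Finite E]
    (hcardE : Nat.card E = p ^ 2) (hexp : ∀ x : E, x ^ p = 1)
    {R : Type*} [Group R] [Finite R] (hcomm : ∀ a b : R, a * b = b * a)
    (hcop : (Nat.card R).Coprime p) (φ : E →* MulAut R)
    (Hyp : ∀ e : E, e ≠ 1 → ∀ r : R, φ e r = r → ∀ e' : E, φ e' r = r) :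
    ∀ (e : E) (r : R), φ e r = r := by
  classical
  letI : CommGroup R := { (inferInstance : Group R) with mul_comm := fun a b => hcomm a b }
  letI : Fintype E := Fintype.ofFinite E
  haveI : Nontrivial E := by
    rw [← Finite.one_lt_card_iff_nontrivial, hcardE]
    exact one_lt_pow₀ hp.one_lt two_ne_zero
  obtain ⟨e₁, he₁⟩ := exists_ne (1 : E)
  set C : Subgroup R := fixedSub φ with hCdef
  -- products over subgroups of `E` land in `C`
  have hsubfix : ∀ (H : Subgroup E) (e₀ : E), e₀ ∈ H → e₀ ≠ 1 → ∀ x : R,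
      (∏ e ∈ Finset.univ.filter (· ∈ H), φ e x) ∈ C := by
    intro H e₀ h0 hne x
    have hfix : φ e₀ (∏ e ∈ Finset.univ.filter (· ∈ H), φ e x)
        = ∏ e ∈ Finset.univ.filter (· ∈ H), φ e x := by
      rw [map_prod]
      refine Finset.prod_nbij' (fun e => e₀ * e) (fun e => e₀⁻¹ * e) ?_ ?_ ?_ ?_ ?_
      · intro a ha
        simp only [Finset.mem_filter, Finset.mem_univ, true_and] at ha ⊢
        exact H.mul_mem h0 ha
      · intro a ha
        simp only [Finset.mem_filter, Finset.mem_univ, true_and] at ha ⊢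
        exact H.mul_mem (H.inv_mem h0) ha
      · intro a _; group
      · intro a _; group
      · intro a _
        rw [← MulAut.mul_apply, ← map_mul]
    intro e'
    exact Hyp e₀ hne _ hfix e'
  -- order of nontrivial elements is `p`
  have horder : ∀ e₀ : E, e₀ ≠ 1 → orderOf e₀ = p := by
    intro e₀ hne
    rcases (Nat.Prime.eq_one_or_self_of_dvd hp _ (orderOf_dvd_of_pow_eq_one (hexp e₀))) with h | h
    · exact absurd (orderOf_eq_one_iff.mp h) hne
    · exact h
  -- nontrivial elements generate the same line iff they lie in it
  have hzeq : ∀ e₀ e : E, e₀ ≠ 1 → e ≠ 1 → e ∈ Subgroup.zpowers e₀ →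
      Subgroup.zpowers e = Subgroup.zpowers e₀ := by
    intro e₀ e h0 h1 hmem
    refine Subgroup.eq_of_le_of_card_ge (Subgroup.zpowers_le.mpr hmem) ?_
    rw [Nat.card_zpowers, Nat.card_zpowers, horder e₀ h0, horder e h1]
  -- the lines, and the fibration of `E \ {1}` by lines
  set Sfin : Finset E := Finset.univ.erase 1 with hSfin
  set T : Finset (Subgroup E) := Sfin.image (fun e => Subgroup.zpowers e) with hT
  have hmaps : ∀ e ∈ Sfin, Subgroup.zpowers e ∈ T := fun e he => Finset.mem_image_of_mem _ he
  have hfib : ∀ L ∈ T, Sfin.filter (fun e => Subgroup.zpowers e = L)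
      = (Finset.univ.filter (· ∈ L)).erase 1 := by
    intro L hL
    obtain ⟨e₀, he₀S, he₀⟩ := Finset.mem_image.mp hL
    have h0 : e₀ ≠ 1 := (Finset.mem_erase.mp he₀S).1
    ext e
    constructor
    · intro hmem
      obtain ⟨hS, hze⟩ := Finset.mem_filter.mp hmem
      have hne : e ≠ 1 := (Finset.mem_erase.mp hS).1
      exact Finset.mem_erase.mpr ⟨hne,
        Finset.mem_filter.mpr ⟨Finset.mem_univ e, hze ▸ Subgroup.mem_zpowers e⟩⟩
    · intro hmem
      obtain ⟨hne, hf⟩ := Finset.mem_erase.mp hmem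
      have hmemL := (Finset.mem_filter.mp hf).2
      refine Finset.mem_filter.mpr ⟨Finset.mem_erase.mpr ⟨hne, Finset.mem_univ e⟩, ?_⟩
      rw [← he₀] at hmemL
      rw [hzeq e₀ e h0 hne hmemL, he₀]
  have hLcard : ∀ L ∈ T, (Finset.univ.filter (· ∈ L)).card = p := by
    intro L hL
    obtain ⟨e₀, he₀S, he₀⟩ := Finset.mem_image.mp hL
    have h0 : e₀ ≠ 1 := (Finset.mem_erase.mp he₀S).1
    have : (Finset.univ.filter (· ∈ L)).card = Fintype.card ↥L := (Fintype.card_subtype _).symm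
    rw [this, ← Nat.card_eq_fintype_card, ← he₀, Nat.card_zpowers, horder e₀ h0]
  -- count the lines: `T.card = p + 1`
  have hTcard : T.card = p + 1 := by
    have hcount := Finset.card_eq_sum_card_fiberwise hmaps
    have hsum : ∑ L ∈ T, (Sfin.filter (fun e => Subgroup.zpowers e = L)).card
        = T.card * (p - 1) := by
      rw [Finset.sum_congr rfl (fun L hL => ?_), Finset.sum_const, smul_eq_mul]
      rw [hfib L hL, Finset.card_erase_of_mem
        (Finset.mem_filter.mpr ⟨Finset.mem_univ 1, L.one_mem⟩), hLcard L hL]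
    have hS : Sfin.card = p ^ 2 - 1 := by
      rw [hSfin, Finset.card_erase_of_mem (Finset.mem_univ 1), Finset.card_univ,
        ← Nat.card_eq_fintype_card, hcardE]
    rw [hS, hsum] at hcount
    obtain ⟨p', rfl⟩ : ∃ p', p = p' + 1 := ⟨p - 1, (Nat.succ_pred_eq_of_pos hp.pos).symm⟩
    have hp' : 0 < p' := by have := hp.two_le; omega
    have hsq : (p' + 1) ^ 2 - 1 = (p' + 2) * p' := by
      have : (p' + 1) ^ 2 = (p' + 2) * p' + 1 := by ring
      omega
    rw [hsq] at hcount
    have hsub : p' + 1 - 1 = p' := by omega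
    rw [hsub] at hcount
    have := Nat.eq_of_mul_eq_mul_right hp' hcount
    omega
  -- the key identity : `x ^ p ∈ C` for every `x`
  have hxp : ∀ x : R, x ^ p ∈ C := by
    intro x
    set NTop : R := ∏ e ∈ Finset.univ, φ e x with hNTop
    have hNTopC : NTop ∈ C := by
      have := hsubfix ⊤ e₁ (Subgroup.mem_top e₁) he₁ x
      rwa [Finset.filter_true_of_mem (fun e _ => Subgroup.mem_top e)] at this
    set PL : R := ∏ L ∈ T, ∏ e ∈ Finset.univ.filter (· ∈ L), φ e x with hPL
    have hPLC : PL ∈ C := by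
      refine Subgroup.prod_mem C (fun L hL => ?_)
      obtain ⟨e₀, he₀S, he₀⟩ := Finset.mem_image.mp hL
      have h0 : e₀ ≠ 1 := (Finset.mem_erase.mp he₀S).1
      exact hsubfix L e₀ (he₀ ▸ Subgroup.mem_zpowers e₀) h0 x
    -- fiberwise product identity
    have hP1 : ∏ e ∈ Sfin, φ e x
        = ∏ L ∈ T, ∏ e ∈ Sfin.filter (fun e => Subgroup.zpowers e = L), φ e x :=
      (Finset.prod_fiberwise_of_maps_to hmaps _).symm
    have hinner : ∀ L ∈ T, ∏ e ∈ Sfin.filter (fun e => Subgroup.zpowers e = L), φ e x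
        = (∏ e ∈ Finset.univ.filter (· ∈ L), φ e x) * x⁻¹ := by
      intro L hL
      rw [hfib L hL]
      have h1mem : (1 : E) ∈ Finset.univ.filter (· ∈ L) :=
        Finset.mem_filter.mpr ⟨Finset.mem_univ 1, L.one_mem⟩
      have hpe := Finset.mul_prod_erase (Finset.univ.filter (· ∈ L)) (fun e => φ e x) h1mem
      simp only [map_one, MulAut.one_apply] at hpe
      calc ∏ e ∈ (Finset.univ.filter (· ∈ L)).erase 1, φ e x
          = x⁻¹ * (x * ∏ e ∈ (Finset.univ.filter (· ∈ L)).erase 1, φ e x) := by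
            rw [inv_mul_cancel_left]
        _ = x⁻¹ * ∏ e ∈ Finset.univ.filter (· ∈ L), φ e x := by rw [hpe]
        _ = (∏ e ∈ Finset.univ.filter (· ∈ L), φ e x) * x⁻¹ := mul_comm _ _
    have hP2 : ∏ e ∈ Sfin, φ e x = PL * (x⁻¹) ^ (p + 1) := by
      rw [hP1, Finset.prod_congr rfl hinner, Finset.prod_mul_distrib, Finset.prod_const, hTcard,
        hPL]
    have hP3 : NTop = x * ∏ e ∈ Sfin, φ e x := by
      have hpe := Finset.mul_prod_erase Finset.univ (fun e => φ e x) (Finset.mem_univ (1 : E))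
      simp only [map_one, MulAut.one_apply] at hpe
      rw [hNTop, ← hpe, hSfin]
    have hfinal : x ^ p = NTop⁻¹ * PL := by
      rw [hP3, hP2, pow_succ, inv_pow]
      simp [mul_inv_rev, mul_comm, mul_assoc, mul_left_comm, inv_inv]
    rw [hfinal]
    exact C.mul_mem (C.inv_mem hNTopC) hPLC
  -- conclude using coprimality
  intro e x
  have hx := hxp x
  have hcop' : p.Coprime (orderOf x) :=
    Nat.Coprime.coprime_dvd_right (orderOf_dvd_natCard x) (Nat.coprime_comm.mp hcop)
  obtain ⟨m, hm⟩ := exists_pow_eq_self_of_coprime hcop'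
  have hxC : x ∈ C := hm ▸ C.pow_mem hx m
  exact hxC e

universe uR

open scoped Pointwise in
/-- Main abstract claim: an elementary abelian group of order `p²` acting on a finite group of
order coprime to `p`, such that any point fixed by one nontrivial element is fixed by all,
acts trivially. -/
lemma claim_main {p : ℕ} (hp : p.Prime) {E : Type*} [Group E] [Finite E]
    (hcardE : Nat.card E = p ^ 2) (hexp : ∀ x : E, x ^ p = 1) :
    ∀ (n : ℕ) (R : Type uR) [Group R] [Finite R], Nat.card R ≤ n →
      (Nat.card R).Coprime p →
      ∀ φ : E →* MulAut R,
        (∀ e : E, e ≠ 1 → ∀ r : R, φ e r = r → ∀ e' : E, φ e' r = r) →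
        ∀ (e : E) (r : R), φ e r = r := by
  have hEp : IsPGroup p E := IsPGroup.of_card hcardE
  haveI : Nontrivial E := by
    rw [← Finite.one_lt_card_iff_nontrivial, hcardE]
    exact one_lt_pow₀ hp.one_lt two_ne_zero
  obtain ⟨e₁, he₁⟩ := exists_ne (1 : E)
  intro n
  induction n using Nat.strong_induction_on with
  | _ n IH =>
  intro R _ _ hn hcop φ Hyp
  by_cases hcomm : ∀ a b : R, a * b = b * a
  · exact claim_comm hp hcardE hexp hcomm hcop φ Hyp
  have hRnt : Nontrivial R := by
    by_contra h
    rw [not_nontrivial_iff_subsingleton] at h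
    exact hcomm fun a b => Subsingleton.elim _ _
  have hRpos : 0 < Nat.card R := Nat.card_pos
  by_cases hcent : Subgroup.center R = ⊥
  · -- trivial center: generate by E-invariant Sylow subgroups
    set C : Subgroup R := fixedSub φ with hC
    suffices hCt : C = ⊤ by
      intro e r
      have hr : r ∈ C := hCt ▸ Subgroup.mem_top r
      exact hr e
    have hkey : ∀ q : ℕ, q.Prime → q ^ (Nat.card R).factorization q ∣ Nat.card ↥C := by
      intro q hq
      haveI := Fact.mk hq
      letI : MulDistribMulAction E R := MulDistribMulAction.compHom R φ
      have hcards : ¬ p ∣ Nat.card (Sylow q R) := by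
        obtain ⟨P⟩ := (inferInstance : Nonempty (Sylow q R))
        have h1 : Nat.card (Sylow q R) ∣ Nat.card R :=
          P.card_eq_index_normalizer ▸ Subgroup.index_dvd_card _
        intro hpd
        have h2 : p ∣ Nat.card R := hpd.trans h1
        have h3 : p ∣ 1 := hcop ▸ Nat.dvd_gcd h2 dvd_rfl
        exact hp.one_lt.ne' (Nat.eq_one_of_dvd_one h3)
      obtain ⟨S, hS⟩ := helperA hp hEp hcards
      have hinv : ∀ e : E, ∀ s ∈ (S : Subgroup R), φ e s ∈ (S : Subgroup R) := by
        intro e s hs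
        have h1 : e • s ∈ e • (S : Subgroup R) := Subgroup.smul_mem_pointwise_smul s e _ hs
        rw [← Sylow.pointwise_smul_def, hS e] at h1
        exact h1
      have hSne : (S : Subgroup R) ≠ ⊤ := by
        intro htop
        have hqR : IsPGroup q R := by
          intro g
          have hg : g ∈ (S : Subgroup R) := htop ▸ Subgroup.mem_top g
          obtain ⟨k, hk⟩ := S.2 ⟨g, hg⟩
          exact ⟨k, by simpa [Subtype.ext_iff] using hk⟩
        have hcnt := hqR.center_nontrivial
        rw [hcent] at hcnt
        obtain ⟨x, y, hxy⟩ := hcnt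
        exact hxy (Subtype.ext ((Subgroup.mem_bot.mp x.2).trans (Subgroup.mem_bot.mp y.2).symm))
      have hcardS : Nat.card ↥(S : Subgroup R) < Nat.card R :=
        lt_of_le_of_ne (Subgroup.card_le_card_group _)
          (fun h => hSne (Subgroup.eq_top_of_card_eq _ h))
      have hfixS := IH (Nat.card ↥(S : Subgroup R)) (lt_of_lt_of_le hcardS hn)
        ↥(S : Subgroup R) le_rfl
        (Nat.Coprime.coprime_dvd_left (Subgroup.card_subgroup_dvd_card _) hcop)
        (restrictAut φ (S : Subgroup R) hinv)
        (by
          intro e he s hfix e'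
          have h1 : φ e (s : R) = (s : R) := by
            rw [← restrictAut_apply φ _ hinv e s, hfix]
          exact Subtype.ext (by rw [restrictAut_apply]; exact Hyp e he _ h1 e'))
      have hle : (S : Subgroup R) ≤ C := by
        intro s hs e
        have h2 := hfixS e ⟨s, hs⟩
        rw [Subtype.ext_iff, restrictAut_apply] at h2
        exact h2
      have h3 : Nat.card ↥(S : Subgroup R) ∣ Nat.card ↥C := Subgroup.card_dvd_of_le hle
      rwa [S.card_eq_multiplicity] at h3
    have hdvd : Nat.card R ∣ Nat.card ↥C := by
      rw [← Nat.factorization_le_iff_dvd hRpos.ne' Nat.card_pos.ne']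
      refine (Finsupp.le_iff _ _).mpr fun q hqs => ?_
      have hq : q.Prime := Nat.prime_of_mem_primeFactors
        (by rwa [Nat.support_factorization] at hqs)
      exact (Nat.Prime.pow_dvd_iff_le_factorization hq Nat.card_pos.ne').mp (hkey q hq)
    exact Subgroup.eq_top_of_card_eq _
      (le_antisymm (Subgroup.card_le_card_group _) (Nat.le_of_dvd Nat.card_pos hdvd))
  · -- nontrivial center: recurse on center and quotient
    set N := Subgroup.center R with hNdef
    haveI : N.Normal := inferInstance
    have hNtop : N ≠ ⊤ := by
      intro h
      refine hcomm fun a b => ?_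
      have hb : b ∈ N := h ▸ Subgroup.mem_top b
      exact (Subgroup.mem_center_iff.mp hb a)
    have hNinv : ∀ e : E, ∀ z ∈ N, φ e z ∈ N := by
      intro e z hz
      rw [hNdef, Subgroup.mem_center_iff] at hz ⊢
      intro g
      have hg : g = φ e (φ e⁻¹ g) := by
        rw [← MulAut.mul_apply, ← map_mul, mul_inv_cancel, map_one, MulAut.one_apply]
      rw [hg, ← map_mul, ← map_mul, hz (φ e⁻¹ g)]
    have hcardN_lt : Nat.card ↥N < Nat.card R :=
      lt_of_le_of_ne (Subgroup.card_le_card_group _)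
        (fun h => hNtop (Subgroup.eq_top_of_card_eq _ h))
    have hNfix : ∀ e : E, ∀ z ∈ N, φ e z = z := by
      have hN := IH (Nat.card ↥N) (lt_of_lt_of_le hcardN_lt hn) ↥N le_rfl
        (Nat.Coprime.coprime_dvd_left (Subgroup.card_subgroup_dvd_card _) hcop)
        (restrictAut φ N hNinv)
        (by
          intro e he s hfix e'
          have h1 : φ e (s : R) = (s : R) := by
            rw [← restrictAut_apply φ _ hNinv e s, hfix]
          exact Subtype.ext (by rw [restrictAut_apply]; exact Hyp e he _ h1 e'))
      intro e z hz
      have h2 := hN e ⟨z, hz⟩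
      rw [Subtype.ext_iff, restrictAut_apply] at h2
      exact h2
    haveI : Finite (R ⧸ N) := Quotient.finite _
    have hcardQ : Nat.card (R ⧸ N) < Nat.card R := by
      have hmul := Subgroup.card_eq_card_quotient_mul_card_subgroup N
      have hNgt : 1 < Nat.card ↥N := (Subgroup.one_lt_card_iff_ne_bot _).mpr hcent
      calc Nat.card (R ⧸ N) = Nat.card (R ⧸ N) * 1 := (mul_one _).symm
        _ < Nat.card (R ⧸ N) * Nat.card ↥N :=
            mul_lt_mul_of_pos_left hNgt Nat.card_pos
        _ = Nat.card R := hmul.symm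
    have hcopQ : (Nat.card (R ⧸ N)).Coprime p :=
      Nat.Coprime.coprime_dvd_left (Subgroup.card_quotient_dvd_card N) hcop
    have hHypQ : ∀ e : E, e ≠ 1 → ∀ x : R ⧸ N, quotAut φ N hNfix e x = x →
        ∀ e' : E, quotAut φ N hNfix e' x = x := by
      intro e he x hx e'
      obtain ⟨r, rfl⟩ := QuotientGroup.mk_surjective x
      rw [quotAut_mk] at hx
      obtain ⟨r₀, hr₀, hfix⟩ := coset_fix hp hEp hcop φ hNfix e r hx
      have hall := Hyp e he r₀ hfix
      rw [← hr₀, quotAut_mk, hall e']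
    have hQ := IH (Nat.card (R ⧸ N)) (lt_of_lt_of_le hcardQ hn) (R ⧸ N) le_rfl hcopQ
      (quotAut φ N hNfix) hHypQ
    intro e r
    have h1 : (QuotientGroup.mk (φ e₁ r) : R ⧸ N) = QuotientGroup.mk r := by
      rw [← quotAut_mk φ N hNfix, hQ e₁ _]
    obtain ⟨r₀, hr₀, hfix⟩ := coset_fix hp hEp hcop φ hNfix e₁ r h1
    have hall := Hyp e₁ he₁ r₀ hfix
    have hmem : r₀⁻¹ * r ∈ N := QuotientGroup.eq.mp hr₀
    have hr : r = r₀ * (r₀⁻¹ * r) := by rw [mul_inv_cancel_left]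
    rw [hr, map_mul, hall e, hNfix e _ hmem]



/-- If a Sylow `p`-subgroup `Q` of a finite group `A` is a TI subgroup containing an
elementary abelian subgroup of order `p ^ 2`, then every normal subgroup `R` of `A`
of order coprime to `p` is centralized by `Q`. -/
theorem stmt5 {A : Type*} [Group A] [Finite A] {p : ℕ} (hp : p.Prime)
    (Q : Sylow p A)
    (hTI : ∀ a : A, a ∉ Subgroup.normalizer ((Q : Subgroup A) : Set A) →
      (Q : Subgroup A) ⊓ Subgroup.map (MulAut.conj a).toMonoidHom (Q : Subgroup A) = ⊥)
    (hE : ∃ E : Subgroup A, E ≤ (Q : Subgroup A) ∧ Nat.card E = p ^ 2 ∧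
      ∀ x ∈ E, x ^ p = 1) :
    ∀ R : Subgroup A, R.Normal → (Nat.card R).Coprime p →
      R ≤ Subgroup.centralizer ((Q : Subgroup A) : Set A) := by
  intro R hRnorm hRcop
  obtain ⟨E₀, hEQ, hEcard, hEexp⟩ := hE
  haveI := Fact.mk hp
  -- elements in both Q and R are trivial
  have key0 : ∀ x : A, x ∈ (Q : Subgroup A) → x ∈ R → x = 1 := by
    intro x hxQ hxR
    obtain ⟨k, hk⟩ := Q.2 ⟨x, hxQ⟩
    have hx1 : x ^ (p ^ k) = 1 := by
      have := congrArg (Subtype.val) hk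
      simpa using this
    have hd1 : orderOf x ∣ p ^ k := orderOf_dvd_of_pow_eq_one hx1
    have hd2 : orderOf x ∣ Nat.card ↥R := by
      have : orderOf (⟨x, hxR⟩ : ↥R) ∣ Nat.card ↥R := orderOf_dvd_natCard _
      rwa [orderOf_mk] at this
    have hcopk : (Nat.card ↥R).Coprime (p ^ k) := Nat.Coprime.pow_right k hRcop
    have : orderOf x ∣ 1 := hcopk ▸ Nat.dvd_gcd hd2 hd1
    rw [orderOf_eq_one_iff.mp (Nat.eq_one_of_dvd_one this)]
  -- main TI step
  have step1 : ∀ r : A, r ∈ R → ∀ e : A, e ∈ (Q : Subgroup A) → e ≠ 1 → e * r = r * e →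
      ∀ q ∈ (Q : Subgroup A), q * r = r * q := by
    intro r hrR e heQ hene hcomm q hqQ
    have hrN : r ∈ Subgroup.normalizer ((Q : Subgroup A) : Set A) := by
      by_contra hN
      have hTIr := hTI r hN
      have hmem : e ∈ (Q : Subgroup A) ⊓ Subgroup.map (MulAut.conj r).toMonoidHom
          (Q : Subgroup A) := by
        refine ⟨heQ, ?_⟩
        refine Subgroup.mem_map.mpr ⟨e, heQ, ?_⟩
        show r * e * r⁻¹ = e
        rw [← hcomm]
        group
      rw [hTIr] at hmem
      exact hene (Subgroup.mem_bot.mp hmem)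
    have hy : r * q * r⁻¹ ∈ (Q : Subgroup A) :=
      (Subgroup.mem_normalizer_iff.mp hrN q).mp hqQ
    have hz1 : r * q * r⁻¹ * q⁻¹ ∈ (Q : Subgroup A) :=
      Subgroup.mul_mem _ hy (Subgroup.inv_mem _ hqQ)
    have hz2 : r * q * r⁻¹ * q⁻¹ ∈ R := by
      have h1 : q * r⁻¹ * q⁻¹ ∈ R := by
        have := hRnorm.conj_mem r⁻¹ (R.inv_mem hrR) q
        simpa [mul_assoc] using this
      have := R.mul_mem hrR h1
      simpa [mul_assoc] using this
    have hz := key0 _ hz1 hz2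
    have : r * q * r⁻¹ = q := by
      have := congrArg (· * q) hz
      simpa [mul_assoc] using this
    calc q * r = r * (r⁻¹ * q * r) := by group
      _ = r * q := by
        congr 1
        have h2 := congrArg (fun w => r⁻¹ * w * r) this
        simpa [mul_assoc] using h2.symm
  -- the conjugation action of E₀ on R
  let φ : ↥E₀ →* MulAut ↥R := MulAut.conjNormal.comp E₀.subtype
  have hφ : ∀ (e : ↥E₀) (r : ↥R), ((φ e r : ↥R) : A) = e * r * (e : A)⁻¹ := by
    intro e r; rfl
  have hHyp : ∀ e : ↥E₀, e ≠ 1 → ∀ r : ↥R, φ e r = r → ∀ e' : ↥E₀, φ e' r = r := by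
    intro e he r hfix e'
    have hcomm : (e : A) * r = r * e := by
      have h1 := congrArg (Subtype.val) hfix
      rw [hφ] at h1
      have := congrArg (· * (e : A)) h1
      simpa [mul_assoc] using this
    have hene : (e : A) ≠ 1 := by
      intro h
      exact he (Subtype.ext h)
    have hall := step1 r r.2 e (hEQ e.2) hene hcomm
    have hq := hall (e' : A) (hEQ e'.2)
    refine Subtype.ext ?_
    rw [hφ]
    have h3 := congrArg (· * (e' : A)⁻¹) hq.symm
    simpa [mul_assoc] using h3.symm
  have hclaim := claim_main hp hEcard
    (fun x : ↥E₀ => Subtype.ext (by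
      have := hEexp (x : A) x.2
      simpa using this))
    (Nat.card ↥R) ↥R le_rfl hRcop φ hHyp
  -- conclude
  intro r hrR
  rw [Subgroup.mem_centralizer_iff]
  intro q hqQ
  haveI : Nontrivial ↥E₀ := by
    rw [← Finite.one_lt_card_iff_nontrivial, hEcard]
    exact one_lt_pow₀ hp.one_lt two_ne_zero
  obtain ⟨e₁, he₁⟩ := exists_ne (1 : ↥E₀)
  have hene : (e₁ : A) ≠ 1 := fun h => he₁ (Subtype.ext h)
  have hfix := hclaim e₁ ⟨r, hrR⟩
  have hcomm : (e₁ : A) * r = r * e₁ := by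
    have h1 := congrArg (Subtype.val) hfix
    rw [hφ] at h1
    have := congrArg (· * (e₁ : A)) h1
    simpa [mul_assoc] using this
  exact step1 r hrR e₁ (hEQ e₁.2) hene hcomm q hqQ
end

section
/- Let p be a prime, h a positive integer, q = p^h, and F the finite field with q^2 elements. Then the set Q of matrices Q_{a,b}, for a, b in F with a^q + a = b^{q+1}, is closed under matrix multiplication with product law Q_{a,b} · Q_{c,d} = Q_{a+c+b^q d, b+d} (in particular, if a^q + a = b^{q+1} and c^q + c = d^{q+1}, then (a+c+b^q d)^q + (a+c+b^q d) = (b+d)^{q+1}); it is a subgroup of GL_3(F); and Q is not abelian. -/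
open Polynomial in
lemma exists_pow_ne {F : Type*} [Field F] [Fintype F] {q : ℕ} (hq2 : 2 ≤ q)
    (hF : Fintype.card F = q ^ 2) (ε : F) : ∃ x : F, x ^ q ≠ ε * x := by
  classical
  by_contra hco
  push_neg at hco
  set f : F[X] := X ^ q - C ε * X with hf
  have hfne : f ≠ 0 := by
    intro h0
    have : f.coeff q = 1 := by
      simp [hf, coeff_X_pow, coeff_C_mul, coeff_X]
      intro h1; omega
    rw [h0] at this
    simp at this
  have hdeg : f.natDegree ≤ q := by
    apply le_trans (Polynomial.natDegree_sub_le _ _)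
    simp only [natDegree_X_pow, max_le_iff, le_refl, true_and]
    exact le_trans (natDegree_C_mul_le _ _) (by simp; omega)
  have hroots : (Finset.univ : Finset F) ⊆ f.roots.toFinset := by
    intro x _
    rw [Multiset.mem_toFinset, mem_roots hfne]
    simp [IsRoot, hf, hco x]
  have h1 : Fintype.card F ≤ q := by
    calc Fintype.card F = (Finset.univ : Finset F).card := (Finset.card_univ).symm
    _ ≤ f.roots.toFinset.card := Finset.card_le_card hroots
    _ ≤ Multiset.card f.roots := Multiset.toFinset_card_le _
    _ ≤ f.natDegree := f.card_roots'
    _ ≤ q := hdeg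
  rw [hF] at h1
  nlinarith

/-- The matrix `Q_{a,b}` with rows `(1, b^q, a)`, `(0, 1, b)`, `(0, 0, 1)`. -/
def Qmat {F : Type*} [Field F] (q : ℕ) (a b : F) : Matrix (Fin 3) (Fin 3) F :=
  !![1, b ^ q, a; 0, 1, b; 0, 0, 1]

lemma qmul {F : Type*} [Field F] {q : ℕ} (a b c d : F) (hbd : (b + d) ^ q = b ^ q + d ^ q) :
    Qmat q a b * Qmat q c d = Qmat q (a + c + b ^ q * d) (b + d) := by
  ext i j
  fin_cases i <;> fin_cases j <;>
    simp [Qmat, Matrix.mul_apply, Fin.sum_univ_three, Matrix.vecHead, Matrix.vecTail, hbd] <;>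
    ring

/-- The matrices `Q_{a,b}`, for `a^q + a = b^{q+1}` in the field with `q^2` elements,
multiply by `Q_{a,b} Q_{c,d} = Q_{a+c+b^q d, b+d}`, form a subgroup of `GL_3(F)`,
and this group is not abelian. -/
theorem stmt7 {p h : ℕ} (hp : p.Prime) (hh : 0 < h) (q : ℕ) (hq : q = p ^ h)
    {F : Type*} [Field F] [Fintype F] (hF : Fintype.card F = q ^ 2) :
    (∀ a b c d : F, a ^ q + a = b ^ (q + 1) → c ^ q + c = d ^ (q + 1) →
      Qmat q a b * Qmat q c d = Qmat q (a + c + b ^ q * d) (b + d) ∧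
      (a + c + b ^ q * d) ^ q + (a + c + b ^ q * d) = (b + d) ^ (q + 1)) ∧
    (∃ G : Subgroup (Matrix.GeneralLinearGroup (Fin 3) F),
      ∀ M : Matrix.GeneralLinearGroup (Fin 3) F,
        M ∈ G ↔ ∃ a b : F, a ^ q + a = b ^ (q + 1) ∧
          (M : Matrix (Fin 3) (Fin 3) F) = Qmat q a b) ∧
    ¬ (∀ a b c d : F, a ^ q + a = b ^ (q + 1) → c ^ q + c = d ^ (q + 1) →
        Qmat q a b * Qmat q c d = Qmat q c d * Qmat q a b) := by
  -- basic numerics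
  have hq2 : 2 ≤ q := by
    rw [hq]
    calc 2 ≤ p := hp.two_le
    _ = p ^ 1 := (pow_one p).symm
    _ ≤ p ^ h := Nat.pow_le_pow_right hp.pos hh
  have hq0 : q ≠ 0 := by omega
  -- characteristic p
  haveI hcharp : CharP F p := by
    obtain ⟨p', hcp'⟩ := CharP.exists F
    haveI := hcp'
    have hp' : p'.Prime := CharP.char_is_prime F p'
    obtain ⟨n, hn⟩ := FiniteField.card F p'
    have hpp : p' = p := by
      have h1 : p' ∣ p ^ (h * 2) := by
        rw [pow_mul, ← hq, ← hF, hn.2]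
        exact dvd_pow_self p' n.ne_zero
      exact (Nat.prime_dvd_prime_iff_eq hp' hp).mp (hp'.dvd_of_dvd_pow h1)
    rwa [hpp] at hcp'
  -- Frobenius facts
  have frob : ∀ x y : F, (x + y) ^ q = x ^ q + y ^ q := by
    haveI := Fact.mk hp
    intro x y; rw [hq]; exact add_pow_char_pow x y p h
  have frobneg : ∀ x : F, (-x) ^ q = -(x ^ q) := by
    haveI := Fact.mk hp
    intro x
    rw [← zero_sub, hq, sub_pow_char_pow, ← hq, zero_pow hq0, zero_sub]
  have hqq : ∀ x : F, x ^ (q * q) = x := by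
    intro x
    have := FiniteField.pow_card x
    rwa [hF, sq] at this
  have hxq : ∀ x : F, (x ^ q) ^ q = x := by
    intro x; rw [← pow_mul]; exact hqq x
  -- closure of the defining condition
  have key : ∀ a b c d : F, a ^ q + a = b ^ (q + 1) → c ^ q + c = d ^ (q + 1) →
      (a + c + b ^ q * d) ^ q + (a + c + b ^ q * d) = (b + d) ^ (q + 1) := by
    intro a b c d hab hcd
    have e1 : (a + c + b ^ q * d) ^ q = a ^ q + c ^ q + b * d ^ q := by
      rw [frob, frob, mul_pow, hxq b]
    have e2 : (b + d) ^ (q + 1) = (b ^ q + d ^ q) * (b + d) := by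
      rw [pow_succ, frob]
    rw [pow_succ] at hab hcd
    rw [e1, e2]
    linear_combination hab + hcd
  refine ⟨fun a b c d hab hcd => ⟨qmul a b c d (frob b d), key a b c d hab hcd⟩, ?_, ?_⟩
  · -- subgroup
    have hQ1 : Qmat q (0 : F) 0 = 1 := by
      rw [Qmat, Matrix.one_fin_three, zero_pow hq0]
    set S : Set (Matrix.GeneralLinearGroup (Fin 3) F) :=
      {M | ∃ a b : F, a ^ q + a = b ^ (q + 1) ∧ (M : Matrix (Fin 3) (Fin 3) F) = Qmat q a b}
      with hS
    have mulmem : ∀ {M N}, M ∈ S → N ∈ S → M * N ∈ S := by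
      rintro M N ⟨a, b, hab, hM⟩ ⟨c, d, hcd, hN⟩
      exact ⟨a + c + b ^ q * d, b + d, key a b c d hab hcd,
        by rw [Units.val_mul, hM, hN, qmul a b c d (frob b d)]⟩
    have onemem : (1 : Matrix.GeneralLinearGroup (Fin 3) F) ∈ S :=
      ⟨0, 0, by rw [zero_pow hq0, zero_pow (by omega), add_zero],
        by rw [Units.val_one, hQ1]⟩
    have invmem : ∀ {M}, M ∈ S → M⁻¹ ∈ S := by
      rintro M ⟨a, b, hab, hM⟩
      have hcond : (a ^ q) ^ q + a ^ q = (-b) ^ (q + 1) := by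
        rw [hxq a, pow_succ, frobneg, neg_mul_neg, ← pow_succ, ← hab, add_comm]
      refine ⟨a ^ q, -b, hcond, ?_⟩
      have hright : Qmat q a b * Qmat q (a ^ q) (-b) = 1 := by
        rw [qmul a b (a ^ q) (-b) (frob b (-b))]
        have e1 : a + a ^ q + b ^ q * (-b) = 0 := by
          rw [pow_succ] at hab
          linear_combination hab
        rw [e1, add_neg_cancel, hQ1]
      have h2 := Matrix.inv_eq_right_inv (hM ▸ hright)
      rw [← Matrix.coe_units_inv] at h2
      exact h2
    refine ⟨Subgroup.mk (Submonoid.mk (Subsemigroup.mk S fun ha hb => mulmem ha hb) onemem)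
      (fun ha => invmem ha), fun M => Iff.rfl⟩
  · -- non-abelian
    intro hcomm
    obtain ⟨θ, hθ⟩ := exists_pow_ne hq2 hF (-1 : F)
    obtain ⟨d, hd⟩ := exists_pow_ne hq2 hF (1 : F)
    rw [one_mul] at hd
    have hden : θ ^ q + θ ≠ 0 := by
      intro h0; exact hθ (by linear_combination h0)
    have surj : ∀ s : F, s ^ q = s → ∃ a : F, a ^ q + a = s := by
      intro s hs
      refine ⟨s * θ / (θ ^ q + θ), ?_⟩
      have e1 : (θ ^ q + θ) ^ q = θ ^ q + θ := by
        rw [frob, hxq θ, add_comm]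
      rw [div_pow, mul_pow, hs, e1]
      field_simp
    obtain ⟨a, ha⟩ := surj 1 (one_pow q)
    obtain ⟨c, hc⟩ := surj (d ^ (q + 1)) (by
      rw [← pow_mul]
      have e : (q + 1) * q = q * q + q := by ring
      rw [e, pow_add, hqq d, ← pow_succ'])
    have ha' : a ^ q + a = (1 : F) ^ (q + 1) := by rw [one_pow]; exact ha
    have heq := hcomm a 1 c d ha' hc
    rw [qmul a 1 c d (frob 1 d), qmul c d a 1 (frob d 1)] at heq
    have := congrFun (congrFun heq 0) 2
    simp [Qmat] at this
    exact hd (by linear_combination -this)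
end

section
/- Let p be a prime, h a positive integer, q = p^h, and F the finite field with q^2 elements. Then the number of pairs (a, b) in F × F satisfying a^q + a = b^{q+1} is exactly q^3. -/
open Polynomial

lemma aux_card_le {F : Type*} [Field F] (P : F[X]) (hP : P ≠ 0)
    (s : Finset F) (hs : ∀ x ∈ s, P.eval x = 0) : s.card ≤ P.natDegree := by
  apply Polynomial.card_le_degree_of_subset_roots
  intro x hx
  rw [Finset.mem_val] at hx
  rw [Polynomial.mem_roots hP]
  exact hs x hx

/-- The number of pairs `(a, b)` in the field `F` with `q^2` elements satisfying
`a^q + a = b^{q+1}` (the affine `F`-rational points of the Hermitian curve) is `q^3`. -/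
theorem stmt8 {p h : ℕ} (hp : p.Prime) (hh : 0 < h) (q : ℕ) (hq : q = p ^ h)
    {F : Type*} [Field F] [Fintype F] (hF : Fintype.card F = q ^ 2) :
    Nat.card {ab : F × F // ab.1 ^ q + ab.1 = ab.2 ^ (q + 1)} = q ^ 3 := by
  classical
  haveI : Fact p.Prime := ⟨hp⟩
  have hq2 : 2 ≤ q := by
    rw [hq]
    calc 2 ≤ p ^ 1 := by
            have := hp.two_le; simpa using this
      _ ≤ p ^ h := Nat.pow_le_pow_right hp.pos hh
  -- characteristic of F is p
  haveI hcharF : CharP F p := by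
    obtain ⟨n, hr, hcard⟩ := FiniteField.card F (ringChar F)
    have hrp : ringChar F = p := by
      have hdvd : ringChar F ∣ q ^ 2 := by
        rw [← hF, hcard]
        exact dvd_pow_self _ n.pos.ne'
      rw [hq, ← pow_mul] at hdvd
      exact (Nat.prime_dvd_prime_iff_eq hr hp).1 (hr.dvd_of_dvd_pow hdvd)
    rw [← hrp]; infer_instance
  have hqz : (q : ℕ) ≠ 0 := by omega
  -- the additive map T a = a^q + a
  let T : F →+ F :=
  { toFun := fun a => a ^ q + a
    map_zero' := by simp [zero_pow hqz]
    map_add' := fun x y => by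
      simp only [hq, add_pow_char_pow]
      ring }
  have hTdef : ∀ a : F, T a = a ^ q + a := fun a => rfl
  -- every element of F satisfies x^(q^2) = x
  have hpow : ∀ x : F, x ^ q ^ 2 = x := by
    intro x
    rw [← hF]
    exact FiniteField.pow_card x
  -- kernel has at most q elements
  have hker_le : Nat.card T.ker ≤ q := by
    show Set.ncard (T.ker : Set F) ≤ q
    rw [Set.ncard_eq_toFinset_card']
    have := aux_card_le (F := F) (X ^ q + X) (by
      have : (X ^ q + X : F[X]).Monic := Polynomial.monic_X_pow_add (by
        rw [Polynomial.degree_X]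
        exact_mod_cast (by omega : 1 < q))
      exact this.ne_zero)
      ((T.ker : Set F).toFinset) (by
        intro x hx
        rw [Set.mem_toFinset, SetLike.mem_coe, AddMonoidHom.mem_ker] at hx
        simpa [hTdef] using hx)
    refine this.trans ?_
    refine (Polynomial.natDegree_add_le _ _).trans ?_
    simp only [Polynomial.natDegree_X_pow, Polynomial.natDegree_X]
    exact max_le le_rfl (by omega)
  -- the set of elements fixed by x ↦ x^q
  have hS_le : Set.ncard {x : F | x ^ q = x} ≤ q := by
    rw [Set.ncard_eq_toFinset_card']
    have := aux_card_le (F := F) (X ^ q - X) (by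
      have : (X ^ q - X : F[X]).Monic := Polynomial.monic_X_pow_sub (by
        rw [Polynomial.degree_X]
        exact_mod_cast (by omega : 1 < q))
      exact this.ne_zero)
      ({x : F | x ^ q = x}.toFinset) (by
        intro x hx
        rw [Set.mem_toFinset, Set.mem_setOf_eq] at hx
        simp [hx])
    refine this.trans ?_
    refine (Polynomial.natDegree_sub_le _ _).trans ?_
    simp only [Polynomial.natDegree_X_pow, Polynomial.natDegree_X]
    exact max_le le_rfl (by omega)
  -- range of T lands in S
  have hrange_sub : (T.range : Set F) ⊆ {x : F | x ^ q = x} := by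
    rintro _ ⟨a, rfl⟩
    simp only [Set.mem_setOf_eq, hTdef]
    have h1 : (a ^ q + a) ^ q = a ^ (q * q) + a ^ q := by
      rw [pow_mul, hq, add_pow_char_pow]
    rw [h1, ← pow_two, hpow]
    ring
  -- first isomorphism theorem counting
  have hcardF : Nat.card F = q ^ 2 := by rw [Nat.card_eq_fintype_card, hF]
  have hiso : Nat.card T.range = Nat.card (F ⧸ T.ker) :=
    Nat.card_congr (QuotientAddGroup.quotientKerEquivRange T).toEquiv.symm
  have hprod : Nat.card T.range * Nat.card T.ker = q ^ 2 := by
    rw [hiso, ← AddSubgroup.card_eq_card_quotient_mul_card_addSubgroup, hcardF]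
  have hrange_le : Nat.card T.range ≤ q := by
    have h1 : (T.range : Set F).ncard ≤ q :=
      le_trans (Set.ncard_le_ncard hrange_sub (Set.toFinite _)) hS_le
    exact h1
  have hkpos : 0 < Nat.card T.ker := Nat.card_pos
  have hrpos : 0 < Nat.card T.range := Nat.card_pos
  have hker : Nat.card T.ker = q := by nlinarith [hprod, hrange_le, hker_le, hkpos, hrpos]
  have hrange : Nat.card T.range = q := by nlinarith [hprod, hrange_le, hker_le, hkpos, hrpos]
  -- range of T is exactly the fixed set
  have hrange_eq : (T.range : Set F) = {x : F | x ^ q = x} := by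
    apply Set.eq_of_subset_of_ncard_le hrange_sub _ (Set.toFinite _)
    calc {x : F | x ^ q = x}.ncard ≤ q := hS_le
      _ = (T.range : Set F).ncard := hrange.symm
  -- every norm value is in the range of T
  have hsol : ∀ b : F, ∃ a : F, a ^ q + a = b ^ (q + 1) := by
    intro b
    have hbS : b ^ (q + 1) ∈ {x : F | x ^ q = x} := by
      show (b ^ (q + 1)) ^ q = b ^ (q + 1)
      rw [← pow_mul]
      have he : (q + 1) * q = q ^ 2 + q := by ring
      rw [he, pow_add, hpow, pow_succ, mul_comm]
    rw [← hrange_eq] at hbS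
    obtain ⟨a, ha⟩ := hbS
    exact ⟨a, by simpa [hTdef] using ha⟩
  -- each fiber has exactly q elements
  have hfiber : ∀ b : F, Nat.card {a : F // a ^ q + a = b ^ (q + 1)} = q := by
    intro b
    obtain ⟨a0, ha0⟩ := hsol b
    have e : {a : F // a ^ q + a = b ^ (q + 1)} ≃ T.ker :=
    { toFun := fun a => ⟨a.1 - a0, by
        rw [AddMonoidHom.mem_ker, map_sub]
        have h1 : T a.1 = b ^ (q + 1) := by rw [hTdef, a.2]
        have h2 : T a0 = b ^ (q + 1) := by rw [hTdef, ha0]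
        rw [h1, h2, sub_self]⟩
      invFun := fun x => ⟨x.1 + a0, by
        have hx := AddMonoidHom.mem_ker.1 x.2
        have h1 : T (x.1 + a0) = b ^ (q + 1) := by
          rw [map_add, hx, zero_add, hTdef, ha0]
        simpa [hTdef] using h1⟩
      left_inv := fun a => by ext; simp
      right_inv := fun x => by ext; simp }
    rw [Nat.card_congr e, hker]
  -- assemble
  have e2 : {ab : F × F // ab.1 ^ q + ab.1 = ab.2 ^ (q + 1)} ≃
      Σ b : F, {a : F // a ^ q + a = b ^ (q + 1)} :=
  { toFun := fun x => ⟨x.1.2, x.1.1, x.2⟩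
    invFun := fun y => ⟨(y.2.1, y.1), y.2.2⟩
    left_inv := fun x => rfl
    right_inv := fun y => rfl }
  rw [Nat.card_congr e2, Nat.card_eq_fintype_card, Fintype.card_sigma]
  have : ∀ b : F, Fintype.card {a : F // a ^ q + a = b ^ (q + 1)} = q := by
    intro b
    rw [← Nat.card_eq_fintype_card]
    exact hfiber b
  rw [Finset.sum_congr rfl fun b _ => this b, Finset.sum_const, Finset.card_univ, hF,
    smul_eq_mul]
  ring
end

section
/- Let p be a prime, h a positive integer, q = p^h, and F the finite field with q^2 elements. Let Q be the group of matrices Q_{a,b} with a, b in F and a^q + a = b^{q+1}. Then the center of Q equals Z = {Q_{a,0} : a in F, a^q + a = 0}; equivalently, an element Q_{a,b} of Q is central in Q if and only if b = 0. Moreover Z has exactly q elements and every element of Z has order dividing p (so Z is elementary abelian of order q, isomorphic to (Z/p)^h). -/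
open Polynomial in
private lemma qmat_ker_card {F : Type*} [Field F] [Fintype F] {p h q : ℕ} (hp : p.Prime)
    (hh : 0 < h) (hq : q = p ^ h) (hF : Fintype.card F = q ^ 2)
    [Fact p.Prime] [CharP F p] (hq1 : 1 < q) (hq0 : (q : F) = 0) :
    Nat.card {a : F // a ^ q + a = 0} = q := by
  classical
  set f : F[X] := X ^ q + X with hf
  have hfrobP : ∀ x y : F[X], (x + y) ^ q = x ^ q + y ^ q := by
    intro x y; rw [hq]; exact add_pow_char_pow x y p h
  have hdeg : f.natDegree = q := by
    rw [hf]
    compute_degree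
    · rw [if_neg (by omega)]; norm_num
    · omega
  have hfne : f ≠ 0 := fun h0 => by simp [h0] at hdeg; omega
  have hdvd : f * (f ^ (q - 1) - 1) = X ^ q ^ 2 - X := by
    have : f * (f ^ (q - 1) - 1) = f ^ q - f := by
      rw [mul_sub, mul_one, ← pow_succ']
      congr 2
      omega
    rw [this, hf, hfrobP, ← pow_mul, ← sq]
    ring
  have hgsplits : Splits (X ^ q ^ 2 - X : F[X]) := by
    rw [splits_iff_card_roots]
    rw [← hF, FiniteField.roots_X_pow_card_sub_X, hF]
    rw [FiniteField.X_pow_card_sub_X_natDegree_eq F (by nlinarith)]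
    simp [Finset.card_univ, hF]
  have hfsplits : Splits f :=
    hgsplits.of_dvd (FiniteField.X_pow_card_sub_X_ne_zero F (by nlinarith))
      ⟨_, hdvd.symm⟩
  have hsep : f.Separable := by
    rw [separable_def]
    have hd : f.derivative = 1 := by
      rw [hf]
      simp [derivative_X_pow, hq0]
    rw [hd]
    exact isCoprime_one_right
  have hroots : f.roots.card = q := by
    rw [← hdeg, ← splits_iff_card_roots]; exact hfsplits
  have hsetr : {a : F | a ^ q + a = 0} = ↑f.roots.toFinset := by
    ext x
    simp [mem_roots hfne, hf, IsRoot]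
    exact fun _ => by rw [← hf]; exact hfne
  calc Nat.card {a : F // a ^ q + a = 0} = ({a : F | a ^ q + a = 0} : Set F).ncard := rfl
    _ = (↑f.roots.toFinset : Set F).ncard := by rw [hsetr]
    _ = f.roots.toFinset.card := Set.ncard_coe_finset _
    _ = f.roots.card := Multiset.toFinset_card_of_nodup (nodup_roots hsep)
    _ = q := hroots

open Polynomial in
private lemma qmat_trace_surj {F : Type*} [Field F] [Fintype F] {q : ℕ}
    (hF : Fintype.card F = q ^ 2) (hq1 : 1 < q)
    (hfrob : ∀ x y : F, (x + y) ^ q = x ^ q + y ^ q)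
    (hxq2 : ∀ x : F, x ^ q ^ 2 = x)
    (hker : Nat.card {a : F // a ^ q + a = 0} = q) :
    ∀ y : F, y ^ q = y → ∃ c : F, c ^ q + c = y := by
  classical
  set τ : F →+ F := AddMonoidHom.mk' (fun x => x ^ q + x)
    (fun x y => by simp only [hfrob]; ring) with hτ
  have hkerc : Nat.card τ.ker = q := by
    rw [← hker]
    apply Nat.card_congr
    apply Equiv.subtypeEquivRight
    intro x
    simp [hτ, AddMonoidHom.mem_ker]
  have hrange : Nat.card τ.range = q := by
    have h1 : Nat.card F = Nat.card (F ⧸ τ.ker) * Nat.card τ.ker :=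
      AddSubgroup.card_eq_card_quotient_mul_card_addSubgroup _
    have h2 : Nat.card (F ⧸ τ.ker) = Nat.card τ.range :=
      Nat.card_congr (QuotientAddGroup.quotientKerEquivRange τ).toEquiv
    have h3 : Nat.card F = q ^ 2 := by rw [Nat.card_eq_fintype_card, hF]
    rw [h3, h2, hkerc] at h1
    nlinarith [h1]
  set T : Set F := {y : F | y ^ q = y} with hT
  have hsub : (τ.range : Set F) ⊆ T := by
    rintro - ⟨x, rfl⟩
    show (x ^ q + x) ^ q = x ^ q + x
    rw [hfrob, ← pow_mul, ← sq, hxq2]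
    ring
  have hTle : T.ncard ≤ q := by
    have hne : (X ^ q - X : F[X]) ≠ 0 := FiniteField.X_pow_card_sub_X_ne_zero F hq1
    have hsub2 : T ⊆ ↑(X ^ q - X : F[X]).roots.toFinset := by
      intro x hx
      simp only [Finset.coe_sort_coe, Multiset.mem_toFinset, Finset.mem_coe, mem_roots hne,
        IsRoot, eval_sub, eval_pow, eval_X]
      exact sub_eq_zero.mpr hx
    calc T.ncard ≤ (X ^ q - X : F[X]).roots.toFinset.card := by
          simpa using Set.ncard_le_ncard hsub2 (Set.toFinite _)
      _ ≤ Multiset.card (X ^ q - X : F[X]).roots := Multiset.toFinset_card_le _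
      _ ≤ (X ^ q - X : F[X]).natDegree := by exact_mod_cast (X ^ q - X : F[X]).card_roots'
      _ = q := FiniteField.X_pow_card_sub_X_natDegree_eq F hq1
  have heq : (τ.range : Set F) = T := by
    apply Set.eq_of_subset_of_ncard_le hsub _ (Set.toFinite T)
    have : (τ.range : Set F).ncard = q := by
      rw [← hrange]; rfl
    omega
  intro y hy
  have : y ∈ (τ.range : Set F) := heq ▸ hy
  obtain ⟨c, hc⟩ := this
  exact ⟨c, hc⟩

private lemma qmat_comm_iff {F : Type*} [Field F] (q : ℕ) (a b c d : F) :
    (Qmat q a b * Qmat q c d = Qmat q c d * Qmat q a b) ↔ b ^ q * d = d ^ q * b := by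
  constructor
  · intro H
    have h02 := congrFun (congrFun H 0) 2
    simp [Qmat, Matrix.mul_apply, Fin.sum_univ_three] at h02
    linear_combination h02
  · intro hbd
    ext i j
    fin_cases i <;> fin_cases j <;>
      simp [Qmat, Matrix.mul_apply, Fin.sum_univ_three, Matrix.vecHead, Matrix.vecTail,
        Function.comp, -mul_eq_mul_right_iff, -mul_eq_mul_left_iff] <;>
      first
      | linear_combination hbd
      | linear_combination -hbd
      | ring

private lemma qmat_pow {F : Type*} [Field F] (q : ℕ) (hq : q ≠ 0) (a : F) (n : ℕ) :
    Qmat q a 0 ^ n = !![1, 0, n * a; 0, 1, 0; 0, 0, 1] := by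
  induction n with
  | zero => simp [Matrix.one_fin_three]
  | succ n ih =>
    rw [pow_succ, ih, Qmat]
    ext i j
    fin_cases i <;> fin_cases j <;>
      simp [Matrix.mul_apply, Fin.sum_univ_three, Matrix.vecHead, Matrix.vecTail,
        Function.comp, zero_pow hq, -mul_eq_mul_right_iff, -mul_eq_mul_left_iff] <;>
      push_cast <;> ring

/-- The center of the group `Q = {Q_{a,b} : a^q + a = b^{q+1}}` over the field with `q^2`
elements is `Z = {Q_{a,0} : a^q + a = 0}`: an element `Q_{a,b}` is central iff `b = 0`.
Moreover `Z` has exactly `q` elements, each of order dividing `p`. -/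
theorem stmt9 {p h : ℕ} (hp : p.Prime) (hh : 0 < h) (q : ℕ) (hq : q = p ^ h)
    {F : Type*} [Field F] [Fintype F] (hF : Fintype.card F = q ^ 2) :
    (∀ a b : F, a ^ q + a = b ^ (q + 1) →
      ((∀ c d : F, c ^ q + c = d ^ (q + 1) →
          Qmat q a b * Qmat q c d = Qmat q c d * Qmat q a b) ↔ b = 0)) ∧
    Nat.card {a : F // a ^ q + a = 0} = q ∧
    (∀ a : F, a ^ q + a = 0 → Qmat q a 0 ^ p = 1) := by
  classical
  have hq1 : 1 < q := by rw [hq]; exact Nat.one_lt_pow hh.ne' hp.one_lt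
  have hqne : q ≠ 0 := by omega
  have hp0 : (p : F) = 0 := by
    have := FiniteField.cast_card_eq_zero F
    rw [hF, hq] at this
    rw [← pow_mul] at this
    push_cast at this
    exact pow_eq_zero_iff (by positivity) |>.mp this
  have hcharp : CharP F p := by
    have := CharP.ringChar_of_prime_eq_zero hp hp0
    rw [← this]; exact ringChar.charP F
  haveI := Fact.mk hp
  haveI := hcharp
  have hq0 : (q : F) = 0 := by rw [hq]; push_cast [hp0]; exact zero_pow hh.ne'
  have hfrob : ∀ x y : F, (x + y) ^ q = x ^ q + y ^ q := by
    intro x y; rw [hq]; exact add_pow_char_pow x y p h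
  have hxq2 : ∀ x : F, x ^ q ^ 2 = x := by
    intro x; rw [← hF]; exact FiniteField.pow_card x
  have hker : Nat.card {a : F // a ^ q + a = 0} = q :=
    qmat_ker_card hp hh hq hF hq1 hq0
  have hsurj : ∀ y : F, y ^ q = y → ∃ c : F, c ^ q + c = y :=
    qmat_trace_surj hF hq1 hfrob hxq2 hker
  refine ⟨?_, hker, ?_⟩
  · intro a b _hab
    constructor
    · intro H
      by_contra hb
      -- from d = 1 we get b^q = b
      obtain ⟨c1, hc1⟩ := hsurj 1 (one_pow q)
      have h1 : b ^ q * 1 = 1 ^ q * b :=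
        (qmat_comm_iff q a b c1 1).mp (H c1 1 (by rw [one_pow]; exact hc1))
      simp at h1
      -- hence every d satisfies d^q = d
      have hall : ∀ d : F, d ^ q = d := by
        intro d
        have hdq : (d ^ (q + 1)) ^ q = d ^ (q + 1) := by
          rw [← pow_mul]
          have he : (q + 1) * q = q ^ 2 + q := by ring
          rw [he, pow_add, hxq2]
          ring
        obtain ⟨c, hc⟩ := hsurj (d ^ (q + 1)) hdq
        have h2 : b ^ q * d = d ^ q * b := (qmat_comm_iff q a b c d).mp (H c d hc)
        rw [h1] at h2
        have h3 : d * b = d ^ q * b := by linear_combination h2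
        exact (mul_right_cancel₀ hb h3).symm
      -- contradiction: F has q^2 > q elements but all are roots of X^q - X
      have hcard : Fintype.card F ≤ q := by
        open Polynomial in
        have hne : (X ^ q - X : F[X]) ≠ 0 := FiniteField.X_pow_card_sub_X_ne_zero F hq1
        have hsub2 : Finset.univ ⊆ (X ^ q - X : F[X]).roots.toFinset := by
          intro x _
          simp only [Multiset.mem_toFinset, mem_roots hne, IsRoot, eval_sub, eval_pow, eval_X]
          exact sub_eq_zero.mpr (hall x)
        calc Fintype.card F = Finset.univ.card := (Finset.card_univ (α := F)).symm
          _ ≤ (X ^ q - X : F[X]).roots.toFinset.card := Finset.card_le_card hsub2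
          _ ≤ Multiset.card (X ^ q - X : F[X]).roots := Multiset.toFinset_card_le _
          _ ≤ (X ^ q - X : F[X]).natDegree := by exact_mod_cast (X ^ q - X : F[X]).card_roots'
          _ = q := FiniteField.X_pow_card_sub_X_natDegree_eq F hq1
      rw [hF] at hcard
      nlinarith
    · intro hb
      subst hb
      intro c d _hcd
      rw [qmat_comm_iff]
      simp [zero_pow hqne]
  · intro a _ha
    rw [qmat_pow q hqne a p, hp0]
    simp [Matrix.one_fin_three]
end

section
/- Let p be a prime, h a positive integer, q = p^h, and F the finite field with q^2 elements. Let Q be the group of matrices Q_{a,b} with a, b in F and a^q + a = b^{q+1}, and let Z be the center of Q. Then for all g, h in Q the commutator g h g^{-1} h^{-1} lies in Z, for all g in Q the power g^p lies in Z, and the quotient group Q/Z has order q^2 (so Q/Z is elementary abelian of order q^2, isomorphic to (Z/p)^{2h}). -/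
section Helpers

variable {F : Type*} [Field F] {p : ℕ} [Fact p.Prime] [CharP F p] (h : ℕ)

lemma Qmat_congr {q : ℕ} {a b a' b' : F} (ha : a = a') (hb : b = b') :
    Qmat q a b = Qmat q a' b' := by rw [ha, hb]

lemma Qmat_mul (a b c d : F) :
    Qmat (p ^ h) a b * Qmat (p ^ h) c d
      = Qmat (p ^ h) (a + c + b ^ p ^ h * d) (b + d) := by
  ext i j
  fin_cases i <;> fin_cases j <;>
    simp [Qmat, Matrix.mul_fin_three, add_pow_char_pow] <;> ring

lemma Qmat_one : Qmat (p ^ h) (0 : F) 0 = 1 := by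
  have h0 : (0 : F) ^ p ^ h = 0 :=
    zero_pow (pow_ne_zero _ (Fact.out (p := p.Prime)).ne_zero)
  simp [Qmat, Matrix.one_fin_three, h0]

lemma Qmat_inv (a b : F) :
    (Qmat (p ^ h) a b)⁻¹ = Qmat (p ^ h) (b ^ (p ^ h + 1) - a) (-b) := by
  apply Matrix.inv_eq_right_inv
  rw [Qmat_mul, ← Qmat_one (F := F) (p := p) h]
  apply Qmat_congr <;> ring

lemma choose_succ_two (n : ℕ) : (n + 1).choose 2 = n.choose 1 + n.choose 2 := rfl

lemma two_mul_choose_two (n : ℕ) : 2 * n.choose 2 = n * (n - 1) := by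
  induction n with
  | zero => rfl
  | succ n ih =>
    rw [choose_succ_two, Nat.choose_one_right, Nat.mul_add, ih]
    cases n with
    | zero => rfl
    | succ m => simp only [Nat.succ_sub_one]; ring

lemma Qmat_pow (a b : F) (n : ℕ) :
    Qmat (p ^ h) a b ^ n
      = Qmat (p ^ h) (n * a + (n.choose 2) * b ^ (p ^ h + 1)) (n * b) := by
  induction n with
  | zero =>
    rw [pow_zero, ← Qmat_one (F := F) (p := p) h]
    apply Qmat_congr <;> simp
  | succ n ih =>
    rw [pow_succ, ih, Qmat_mul]
    have hn : ((n : F)) ^ p ^ h = (n : F) := by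
      rw [← iterateFrobenius_def (R := F) p h, map_natCast]
    apply Qmat_congr
    · rw [mul_pow, hn, choose_succ_two, Nat.choose_one_right]
      push_cast
      ring
    · push_cast; ring

end Helpers

/-- For the group `Q = {Q_{a,b} : a^q + a = b^{q+1}}` over the field `F` with `q^2`
elements, with center `Z = {Q_{e,0} : e^q + e = 0}`: all commutators lie in `Z`, all
`p`-th powers lie in `Z`, and the quotient `Q/Z` has order `q^2` (it is isomorphic, via
`Q_{a,b} ↦ b`, to the set of `b`-coordinates, which has `q^2` elements). -/
theorem stmt10 {p h : ℕ} (hp : p.Prime) (hh : 0 < h) (q : ℕ) (hq : q = p ^ h)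
    {F : Type*} [Field F] [Fintype F] (hF : Fintype.card F = q ^ 2) :
    (∀ a b c d : F, a ^ q + a = b ^ (q + 1) → c ^ q + c = d ^ (q + 1) →
      ∃ e : F, e ^ q + e = 0 ∧
        Qmat q a b * Qmat q c d * (Qmat q a b)⁻¹ * (Qmat q c d)⁻¹ = Qmat q e 0) ∧
    (∀ a b : F, a ^ q + a = b ^ (q + 1) →
      ∃ e : F, e ^ q + e = 0 ∧ Qmat q a b ^ p = Qmat q e 0) ∧
    Nat.card {b : F // ∃ a : F, a ^ q + a = b ^ (q + 1)} = q ^ 2 := by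
  haveI : Fact p.Prime := ⟨hp⟩
  -- establish the characteristic
  obtain ⟨r, hr⟩ := CharP.exists F
  haveI : CharP F r := hr
  obtain ⟨n, hr_prime, hcard⟩ := FiniteField.card F r
  have hrp : r = p := by
    have h1 : r ∣ p ^ (h * 2) := by
      rw [pow_mul, ← hq, ← hF, hcard]
      exact dvd_pow_self r n.ne_zero
    exact (Nat.prime_dvd_prime_iff_eq hr_prime hp).1 (hr_prime.dvd_of_dvd_pow h1)
  haveI : CharP F p := hrp ▸ hr
  subst hq
  have hq0 : p ^ h ≠ 0 := pow_ne_zero _ hp.ne_zero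
  have hq1 : 1 < p ^ h := Nat.one_lt_pow hh.ne' hp.one_lt
  have key : ∀ x : F, (x ^ p ^ h) ^ p ^ h = x := by
    intro x
    rw [← pow_mul, show p ^ h * p ^ h = Fintype.card F by rw [hF, sq],
      FiniteField.pow_card]
  have hadd : ∀ x y : F, (x + y) ^ p ^ h = x ^ p ^ h + y ^ p ^ h :=
    fun x y => add_pow_char_pow x y p h
  have hsub : ∀ x y : F, (x - y) ^ p ^ h = x ^ p ^ h - y ^ p ^ h :=
    fun x y => sub_pow_char_pow x y h
  have hnorm : ∀ b : F, (b ^ (p ^ h + 1)) ^ p ^ h = b ^ (p ^ h + 1) := by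
    intro b
    rw [pow_succ, mul_pow, key]
    ring
  refine ⟨?_, ?_, ?_⟩
  · -- commutators
    intro a b c d _ _
    refine ⟨b ^ p ^ h * d - d ^ p ^ h * b, ?_, ?_⟩
    · rw [hsub, mul_pow, mul_pow, key, key]
      ring
    · rw [Qmat_inv, Qmat_inv, Qmat_mul, Qmat_mul, Qmat_mul]
      apply Qmat_congr
      · rw [show b + d + -b = d from by ring, hadd]
        ring
      · ring
  · -- p-th powers
    intro a b _
    refine ⟨(p.choose 2 : F) * b ^ (p ^ h + 1), ?_, ?_⟩
    · have hnat : ((p.choose 2 : ℕ) : F) ^ p ^ h = ((p.choose 2 : ℕ) : F) := by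
        rw [← iterateFrobenius_def (R := F) p h, map_natCast]
      rw [mul_pow, hnat, hnorm]
      have h2 : ((p.choose 2 : ℕ) : F) * b ^ (p ^ h + 1)
            + ((p.choose 2 : ℕ) : F) * b ^ (p ^ h + 1)
          = ((2 * p.choose 2 : ℕ) : F) * b ^ (p ^ h + 1) := by push_cast; ring
      rw [h2, two_mul_choose_two]
      push_cast
      rw [CharP.cast_eq_zero F p]
      ring
    · rw [Qmat_pow]
      apply Qmat_congr
      · rw [CharP.cast_eq_zero F p]; ring
      · rw [CharP.cast_eq_zero F p]; ring
  · -- cardinality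
    classical
    -- any element of scalar polynomial `X^q + cX` has at most `q` roots
    have root_bound : ∀ (c : F) (t : Finset F),
        (∀ x ∈ t, x ^ p ^ h + c * x = 0) → t.card ≤ p ^ h := by
      intro c t ht
      set P : Polynomial F := Polynomial.X ^ p ^ h + Polynomial.C c * Polynomial.X
        with hP
      have hcoeff : P.coeff (p ^ h) = 1 := by
        rw [hP, Polynomial.coeff_add, Polynomial.coeff_X_pow, Polynomial.coeff_C_mul,
          Polynomial.coeff_X, if_pos rfl, if_neg (by omega : ¬ 1 = p ^ h)]
        ring
      have hP0 : P ≠ 0 := fun h0 => by simp [h0] at hcoeff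
      have hdeg : P.natDegree ≤ p ^ h := by
        rw [hP]
        refine (Polynomial.natDegree_add_le _ _).trans (max_le ?_ ?_)
        · simp
        · exact (Polynomial.natDegree_C_mul_le _ _).trans
            (by simp [Polynomial.natDegree_X]; omega)
      have hsubset : t ⊆ P.roots.toFinset := by
        intro x hx
        rw [Multiset.mem_toFinset, Polynomial.mem_roots hP0]
        simp only [hP, Polynomial.IsRoot, Polynomial.eval_add, Polynomial.eval_pow,
          Polynomial.eval_X, Polynomial.eval_mul, Polynomial.eval_C]
        exact ht x hx
      calc t.card ≤ P.roots.toFinset.card := Finset.card_le_card hsubset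
        _ ≤ Multiset.card P.roots := Multiset.toFinset_card_le _
        _ ≤ P.natDegree := Polynomial.card_roots' _
        _ ≤ p ^ h := hdeg
    set T : F → F := fun a => a ^ p ^ h + a with hT
    set S : Finset F := Finset.univ.filter (fun y : F => y ^ p ^ h = y) with hS
    set img : Finset F := Finset.image T Finset.univ with himg
    have himgS : img ⊆ S := by
      intro y hy
      rw [himg, Finset.mem_image] at hy
      obtain ⟨a, -, rfl⟩ := hy
      rw [hS, Finset.mem_filter]
      refine ⟨Finset.mem_univ _, ?_⟩
      simp only [hT]
      rw [hadd, key]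
      ring
    have hScard : S.card ≤ p ^ h := by
      apply root_bound (-1) S
      intro x hx
      rw [hS, Finset.mem_filter] at hx
      rw [hx.2]; ring
    have hfib : ∀ y ∈ img, (Finset.univ.filter fun a : F => T a = y).card ≤ p ^ h := by
      intro y hy
      rw [himg, Finset.mem_image] at hy
      obtain ⟨a₀, -, ha₀⟩ := hy
      have hinj : Set.InjOn (fun a : F => a - a₀)
          ((Finset.univ.filter fun a : F => T a = y) : Finset F) := by
        intro x _ z _ hxz
        simpa using sub_left_injective hxz
      rw [← Finset.card_image_of_injOn hinj]
      apply root_bound 1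
      intro x hx
      rw [Finset.mem_image] at hx
      obtain ⟨z, hz, rfl⟩ := hx
      rw [Finset.mem_filter] at hz
      have hz2 := hz.2
      simp only [hT] at hz2 ha₀
      rw [one_mul, hsub]
      linear_combination hz2 - ha₀
    have hmain : Fintype.card F ≤ p ^ h * img.card := by
      rw [← Finset.card_univ]
      exact Finset.card_le_mul_card_image _ _ hfib
    have himgq : p ^ h ≤ img.card := by
      have h2 : p ^ h * p ^ h ≤ p ^ h * img.card := by
        calc p ^ h * p ^ h = (p ^ h) ^ 2 := (sq _).symm
          _ = Fintype.card F := hF.symm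
          _ ≤ p ^ h * img.card := hmain
      exact Nat.le_of_mul_le_mul_left h2 (Nat.pos_of_ne_zero hq0)
    have heq : img = S := Finset.eq_of_subset_of_card_le himgS (hScard.trans himgq)
    have surj : ∀ b : F, ∃ a : F, a ^ p ^ h + a = b ^ (p ^ h + 1) := by
      intro b
      have hbS : b ^ (p ^ h + 1) ∈ S := by
        rw [hS, Finset.mem_filter]
        exact ⟨Finset.mem_univ _, hnorm b⟩
      rw [← heq, himg, Finset.mem_image] at hbS
      obtain ⟨a, -, ha⟩ := hbS
      exact ⟨a, ha⟩
    calc Nat.card {b : F // ∃ a : F, a ^ p ^ h + a = b ^ (p ^ h + 1)}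
        = Nat.card F := Nat.card_congr (Equiv.subtypeUnivEquiv surj)
      _ = (p ^ h) ^ 2 := by rw [Nat.card_eq_fintype_card, hF]
end

section
/- Let p be a prime, h a positive integer, q = p^h, let n ≥ 3 be an odd integer, and let m = (q^n + 1)/(q + 1), which is an integer. Let K be a field of characteristic p. Suppose a, b in K satisfy b^{q^2} = b and a^q + a = b^{q+1}. Then for all x, y, z in K with x^q + x = y^{q+1} and y^{q^2} - y = z^m, the point (x + b^q y + a, y + b, z) again satisfies both equations: (x + b^q y + a)^q + (x + b^q y + a) = (y + b)^{q+1} and (y + b)^{q^2} - (y + b) = z^m. -/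
/-- The transformation `(x, y, z) ↦ (x + b^q y + a, y + b, z)` (an element of the group
`Q`) maps points of the curve `C_n : x^q + x = y^{q+1}, y^{q^2} - y = z^m` to points of
`C_n`, whenever `b^{q^2} = b` and `a^q + a = b^{q+1}`. -/
theorem stmt11 {p hexp : ℕ} (hp : p.Prime) (hh : 0 < hexp) (q : ℕ) (hq : q = p ^ hexp)
    (n : ℕ) (hn : 3 ≤ n) (hodd : Odd n) (m : ℕ) (hm : m * (q + 1) = q ^ n + 1)
    {K : Type*} [Field K] [CharP K p]
    (a b : K) (hb : b ^ q ^ 2 = b) (hab : a ^ q + a = b ^ (q + 1)) :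
    ∀ x y z : K, x ^ q + x = y ^ (q + 1) → y ^ q ^ 2 - y = z ^ m →
      (x + b ^ q * y + a) ^ q + (x + b ^ q * y + a) = (y + b) ^ (q + 1) ∧
      (y + b) ^ q ^ 2 - (y + b) = z ^ m := by
  haveI : Fact p.Prime := ⟨hp⟩
  have hfrob : ∀ u v : K, (u + v) ^ q = u ^ q + v ^ q := by
    intro u v
    subst hq
    exact add_pow_char_pow u v p hexp
  have hfrob2 : ∀ u v : K, (u + v) ^ q ^ 2 = u ^ q ^ 2 + v ^ q ^ 2 := by
    intro u v
    have : q ^ 2 = p ^ (hexp * 2) := by rw [hq, ← pow_mul]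
    rw [this]
    exact add_pow_char_pow u v p (hexp * 2)
  intro x y z h1 h2
  constructor
  · have hbqq : (b ^ q * y) ^ q = b * y ^ q := by
      rw [mul_pow, ← pow_mul, ← pow_two, hb]
    have key : (x + b ^ q * y + a) ^ q = x ^ q + b * y ^ q + a ^ q := by
      rw [hfrob, hfrob, hbqq]
    rw [key]
    have hyb : (y + b) ^ (q + 1) = y ^ (q + 1) + b * y ^ q + b ^ q * y + b ^ (q + 1) := by
      rw [pow_succ, pow_succ, pow_succ, hfrob]
      ring
    rw [hyb, ← h1, ← hab]
    ring
  · rw [hfrob2, hb]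
    rw [← h2]
    ring
end

section
/- Let p be a prime, h a positive integer, q = p^h, let n ≥ 3 be an odd integer, and let m = (q^n + 1)/(q + 1), which is an integer. Let K be a field of characteristic p and let ζ in K satisfy ζ^{(q^n+1)(q-1)} = 1. Then for all x, y, z in K with x^q + x = y^{q+1} and y^{q^2} - y = z^m, the point (ζ^{q^n+1} x, ζ^m y, ζ z) again satisfies both equations: (ζ^{q^n+1} x)^q + ζ^{q^n+1} x = (ζ^m y)^{q+1} and (ζ^m y)^{q^2} - ζ^m y = (ζ z)^m. -/
/-- The transformation `(x, y, z) ↦ (ζ^{q^n+1} x, ζ^m y, ζ z)`, for `ζ` a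
`(q^n+1)(q-1)`-th root of unity, maps points of the curve
`C_n : x^q + x = y^{q+1}, y^{q^2} - y = z^m` to points of `C_n`. -/
theorem stmt12 {p hexp : ℕ} (hp : p.Prime) (hh : 0 < hexp) (q : ℕ) (hq : q = p ^ hexp)
    (n : ℕ) (hn : 3 ≤ n) (hodd : Odd n) (m : ℕ) (hm : m * (q + 1) = q ^ n + 1)
    {K : Type*} [Field K] [CharP K p]
    (ζ : K) (hζ : ζ ^ ((q ^ n + 1) * (q - 1)) = 1) :
    ∀ x y z : K, x ^ q + x = y ^ (q + 1) → y ^ q ^ 2 - y = z ^ m →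
      (ζ ^ (q ^ n + 1) * x) ^ q + ζ ^ (q ^ n + 1) * x = (ζ ^ m * y) ^ (q + 1) ∧
      (ζ ^ m * y) ^ q ^ 2 - ζ ^ m * y = (ζ * z) ^ m := by
  intro x y z h1 h2
  have hq1 : 1 ≤ q := by
    rw [hq]; exact Nat.one_le_pow _ _ hp.pos
  obtain ⟨q', rfl⟩ : ∃ q', q = q' + 1 := ⟨q - 1, by omega⟩
  have hζ' : ζ ^ (((q' + 1) ^ n + 1) * q') = 1 := by simpa using hζ
  have e1 : ((q' + 1) ^ n + 1) * (q' + 1)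
      = ((q' + 1) ^ n + 1) + ((q' + 1) ^ n + 1) * q' := by ring
  have e2 : m * (q' + 1) ^ 2 = m + ((q' + 1) ^ n + 1) * q' := by
    have : ((q' + 1) ^ n + 1) = m * (q' + 1 + 1) := hm.symm
    rw [this]; ring
  have key1 : ζ ^ (((q' + 1) ^ n + 1) * (q' + 1)) = ζ ^ ((q' + 1) ^ n + 1) := by
    rw [e1, pow_add, hζ', mul_one]
  have key2 : ζ ^ (m * (q' + 1) ^ 2) = ζ ^ m := by
    rw [e2, pow_add, hζ', mul_one]
  constructor
  · rw [mul_pow, ← pow_mul, key1, mul_pow, ← pow_mul, hm, ← mul_add, h1]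
  · rw [mul_pow, ← pow_mul, key2, ← mul_sub, h2, mul_pow]
end

section
/- Let p be a prime, h a positive integer, q = p^h, let n ≥ 3 be an odd integer, and let m = (q^n + 1)/(q + 1), which is an integer. Let K be a field of characteristic p. Suppose (x1, y1, z) and (x2, y2, z) in K^3 both satisfy the equations x^q + x = y^{q+1} and y^{q^2} - y = z^m (with the same third coordinate z). Then there exists a unique pair (a, b) in K^2 with b^{q^2} = b and a^q + a = b^{q+1} such that x2 = x1 + b^q y1 + a and y2 = y1 + b; moreover this pair also satisfies a^{q^2} = a. -/
/-- The group `Q` acts simply transitively on fibers of `(x,y,z) ↦ z` on the curve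
`C_n`: if `(x1, y1, z)` and `(x2, y2, z)` both satisfy `x^q + x = y^{q+1}` and
`y^{q^2} - y = z^m`, there is a unique pair `(a, b)` with `b^{q^2} = b` and
`a^q + a = b^{q+1}` such that `x2 = x1 + b^q y1 + a` and `y2 = y1 + b`; moreover this
pair also satisfies `a^{q^2} = a`. -/
theorem stmt15 {p hexp : ℕ} (hp : p.Prime) (hh : 0 < hexp) (q : ℕ) (hq : q = p ^ hexp)
    (n : ℕ) (hn : 3 ≤ n) (hodd : Odd n) (m : ℕ) (hm : m * (q + 1) = q ^ n + 1)
    {K : Type*} [Field K] [CharP K p]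
    (x1 y1 x2 y2 z : K)
    (h1 : x1 ^ q + x1 = y1 ^ (q + 1)) (h1' : y1 ^ q ^ 2 - y1 = z ^ m)
    (h2 : x2 ^ q + x2 = y2 ^ (q + 1)) (h2' : y2 ^ q ^ 2 - y2 = z ^ m) :
    ∃ a b : K,
      (b ^ q ^ 2 = b ∧ a ^ q + a = b ^ (q + 1) ∧
        x2 = x1 + b ^ q * y1 + a ∧ y2 = y1 + b) ∧
      a ^ q ^ 2 = a ∧
      ∀ a' b' : K, (b' ^ q ^ 2 = b' ∧ a' ^ q + a' = b' ^ (q + 1) ∧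
          x2 = x1 + b' ^ q * y1 + a' ∧ y2 = y1 + b') → a' = a ∧ b' = b := by

  haveI := Fact.mk hp
  have fsub : ∀ u v : K, (u - v) ^ q = u ^ q - v ^ q := by
    intro u v; rw [hq]; exact sub_pow_char_pow ..
  have fadd : ∀ u v : K, (u + v) ^ q = u ^ q + v ^ q := by
    intro u v; rw [hq]; exact add_pow_char_pow ..
  set b := y2 - y1 with hbdef
  set a := x2 - x1 - b ^ q * y1 with hadef
  have hy2 : y2 = y1 + b := by rw [hbdef]; ring
  have hx2 : x2 = x1 + b ^ q * y1 + a := by rw [hadef]; ring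
  have hb2 : b ^ q ^ 2 = b := by
    have e1 : b ^ q ^ 2 = y2 ^ q ^ 2 - y1 ^ q ^ 2 := by
      calc b ^ q ^ 2 = ((y2 - y1) ^ q) ^ q := by rw [← pow_mul, ← pow_two]
        _ = (y2 ^ q - y1 ^ q) ^ q := by rw [fsub]
        _ = (y2 ^ q) ^ q - (y1 ^ q) ^ q := fsub _ _
        _ = y2 ^ q ^ 2 - y1 ^ q ^ 2 := by rw [← pow_mul, ← pow_mul, ← pow_two]
    rw [e1]
    linear_combination h2' - h1'
  have hbb : (b ^ q) ^ q = b := by rw [← pow_mul, ← pow_two]; exact hb2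
  have hyq : y2 ^ q = y1 ^ q + b ^ q := by rw [hy2]; exact fadd _ _
  have haq : a ^ q = x2 ^ q - x1 ^ q - b * y1 ^ q := by
    have e : a ^ q = (x2 - x1) ^ q - (b ^ q * y1) ^ q := by
      rw [hadef]; exact fsub _ _
    rw [e, fsub, mul_pow, hbb]
  have ha : a ^ q + a = b ^ (q + 1) := by
    rw [haq, hadef]
    linear_combination h2 - h1 + y2 * hyq + (y1 ^ q + b ^ q) * hy2
  have ha2 : a ^ q ^ 2 = a := by
    have e : a ^ q ^ 2 + a ^ q = b ^ (q + 1) := by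
      have e1 : (a ^ q + a) ^ q = a ^ q ^ 2 + a ^ q := by
        rw [fadd, ← pow_mul, ← pow_two]
      rw [ha] at e1
      rw [← e1]
      have e2 : (b ^ (q + 1)) ^ q = b ^ q ^ 2 * b ^ q := by
        rw [← pow_mul, ← pow_add]
        congr 1
        ring
      rw [e2, hb2, ← pow_succ']
    linear_combination e - ha
  refine ⟨a, b, ⟨hb2, ha, hx2, hy2⟩, ha2, ?_⟩
  rintro a' b' ⟨_, _, hx', hy'⟩
  have hb' : b' = b := by linear_combination hy2 - hy'
  rw [hb'] at hx'
  exact ⟨by linear_combination hx2 - hx', hb'⟩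
end

section
/- Let p be a prime, h a positive integer, q = p^h, let n ≥ 3 be an odd integer, and let m = (q^n + 1)/(q + 1), which is an integer. Let F be the finite field with q^2 elements. If (x, y, z) in F^3 satisfies x^q + x = y^{q+1} and y^{q^2} - y = z^m, then z = 0. Consequently, the number of triples (x, y, z) in F^3 satisfying both equations is exactly q^3. -/
open Polynomial Finset

/-- Root-count bound: the set of solutions of a polynomial equation over a field is bounded
by the degree. -/
lemma aux_card_le_s16 {F : Type*} [Field F] [Fintype F] [DecidableEq F]
    (P : F[X]) (hP : P ≠ 0) (pred : F → Prop) [DecidablePred pred]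
    (h : ∀ x, pred x → P.eval x = 0) :
    (Finset.univ.filter pred).card ≤ P.natDegree := by
  have hsub : Finset.univ.filter pred ⊆ P.roots.toFinset := by
    intro x hx
    rw [Multiset.mem_toFinset, mem_roots hP]
    exact h x (by simpa using hx)
  calc (Finset.univ.filter pred).card ≤ P.roots.toFinset.card := Finset.card_le_card hsub
    _ ≤ Multiset.card P.roots := Multiset.toFinset_card_le _
    _ ≤ P.natDegree := P.card_roots'

/-- Every point of the curve `C_n : x^q + x = y^{q+1}, y^{q^2} - y = z^m` rational over
the field `F` with `q^2` elements has `z = 0`, and the number of such points is `q^3`. -/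
theorem stmt16 {p hexp : ℕ} (hp : p.Prime) (hh : 0 < hexp) (q : ℕ) (hq : q = p ^ hexp)
    (n : ℕ) (hn : 3 ≤ n) (hodd : Odd n) (m : ℕ) (hm : m * (q + 1) = q ^ n + 1)
    {F : Type*} [Field F] [Fintype F] (hF : Fintype.card F = q ^ 2) :
    (∀ x y z : F, x ^ q + x = y ^ (q + 1) → y ^ q ^ 2 - y = z ^ m → z = 0) ∧
    Nat.card {t : F × F × F //
      t.1 ^ q + t.1 = t.2.1 ^ (q + 1) ∧ t.2.1 ^ q ^ 2 - t.2.1 = t.2.2 ^ m} = q ^ 3 := by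
  classical
  haveI : Fact p.Prime := ⟨hp⟩
  have hq2 : 2 ≤ q := hq ▸ le_trans hp.two_le (Nat.le_self_pow hh.ne' p)
  have hq0 : 0 < q := by omega
  have hm0 : m ≠ 0 := by
    rintro rfl
    simp at hm
  -- characteristic of F is p
  haveI hchar : CharP F p := by
    obtain ⟨c, hc⟩ := CharP.exists F
    haveI := hc
    have hcprime : c.Prime := CharP.char_is_prime F c
    have hdvd : c ∣ q ^ 2 := by
      rw [← hF]
      exact (CharP.cast_eq_zero_iff F c _).1 (FiniteField.cast_card_eq_zero F)
    have : c = p := by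
      have : c ∣ p := by
        have : c ∣ p ^ (hexp * 2) := by rwa [hq, ← pow_mul] at hdvd
        exact hcprime.dvd_of_dvd_pow this
      exact (Nat.prime_dvd_prime_iff_eq hcprime hp).1 this
    rwa [this] at hc
  -- Frobenius is additive
  have hadd : ∀ x y : F, (x + y) ^ q = x ^ q + y ^ q := fun x y => by
    rw [hq]; exact add_pow_char_pow x y p hexp
  -- every element satisfies y ^ q ^ 2 = y
  have hpow : ∀ y : F, y ^ q ^ 2 = y := fun y => by
    rw [← hF]; exact FiniteField.pow_card y
  -- Part 1
  have part1 : ∀ x y z : F, x ^ q + x = y ^ (q + 1) → y ^ q ^ 2 - y = z ^ m → z = 0 := by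
    intro x y z _ h2
    have : z ^ m = 0 := by rw [← h2, hpow y, sub_self]
    exact (pow_eq_zero_iff hm0).1 this
  refine ⟨part1, ?_⟩
  -- the additive map f x = x^q + x
  set f : F →+ F := AddMonoidHom.mk' (fun x => x ^ q + x)
    (fun a b => by show (a + b) ^ q + (a + b) = (a ^ q + a) + (b ^ q + b); rw [hadd]; ring)
    with hf
  have hfval : ∀ x : F, f x = x ^ q + x := fun _ => rfl
  have hdegX : (X : F[X]).degree < (q : WithBot ℕ) := by
    rw [degree_X]; exact_mod_cast (by omega : 1 < q)
  -- card of kernel ≤ q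
  have hker_count : Nat.card f.ker = (Finset.univ.filter (fun x => x ∈ f.ker)).card := by
    rw [Nat.card_eq_fintype_card]
    exact Fintype.card_of_subtype _ (fun x => by simp)
  have hP1 : (X ^ q + X : F[X]).Monic := monic_X_pow_add hdegX
  have hker_le : Nat.card f.ker ≤ q := by
    rw [hker_count]
    calc (Finset.univ.filter (fun x => x ∈ f.ker)).card ≤ (X ^ q + X : F[X]).natDegree :=
      aux_card_le_s16 _ hP1.ne_zero _ (fun x hx => by
        have : x ^ q + x = 0 := by
          have := (f.mem_ker).1 hx
          rwa [hfval] at this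
        simpa using this)
      _ ≤ q := by
        refine le_trans (natDegree_add_le _ _) ?_
        simp only [natDegree_X_pow, natDegree_X]
        omega
  -- T : the set of c with c^q = c, card ≤ q
  set T : Finset F := Finset.univ.filter (fun c => c ^ q = c) with hT
  have hT_le : T.card ≤ q := by
    have hP2 : (X ^ q - X : F[X]).Monic := monic_X_pow_sub hdegX
    calc T.card ≤ (X ^ q - X : F[X]).natDegree :=
      aux_card_le_s16 _ hP2.ne_zero _ (fun x hx => by
        simp only [eval_sub, eval_pow, eval_X, sub_eq_zero]
        exact hx)
      _ ≤ q := by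
        refine le_trans (natDegree_sub_le _ _) ?_
        simp only [natDegree_X_pow, natDegree_X]
        omega
  -- range ⊆ T
  have hrange_sub : (Finset.univ.filter (fun x => x ∈ f.range)) ⊆ T := by
    intro c hc
    simp only [Finset.mem_filter, Finset.mem_univ, true_and, AddMonoidHom.mem_range] at hc
    obtain ⟨x, hx⟩ := hc
    rw [hT, Finset.mem_filter]
    refine ⟨Finset.mem_univ _, ?_⟩
    rw [← hx, hfval, hadd, ← pow_mul, show q * q = q ^ 2 from (sq q).symm, hpow, add_comm]
  have hrange_count : Nat.card f.range = (Finset.univ.filter (fun x => x ∈ f.range)).card := by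
    rw [Nat.card_eq_fintype_card]
    exact Fintype.card_of_subtype _ (fun x => by simp)
  have hrange_card : Nat.card f.range ≤ q := by
    rw [hrange_count]
    exact le_trans (Finset.card_le_card hrange_sub) hT_le
  -- first isomorphism theorem: card range * card ker = q^2
  have hiso : Nat.card f.range * Nat.card f.ker = q ^ 2 := by
    have h1 : Nat.card (F ⧸ f.ker) = Nat.card f.range :=
      Nat.card_congr (QuotientAddGroup.quotientKerEquivRange f).toEquiv
    have h2 := AddSubgroup.card_eq_card_quotient_mul_card_addSubgroup f.ker
    rw [h1] at h2
    rw [← h2, Nat.card_eq_fintype_card, hF]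
  have hkq : Nat.card f.ker = q := by
    have h1 : q * q ≤ q * Nat.card f.ker := by
      calc q * q = Nat.card f.range * Nat.card f.ker := by rw [hiso]; ring
        _ ≤ q * Nat.card f.ker := Nat.mul_le_mul_right _ hrange_card
    exact le_antisymm hker_le (Nat.le_of_mul_le_mul_left h1 hq0)
  have hrq : Nat.card f.range = q := by
    have h2 : Nat.card f.range * q = q * q := by
      have := hiso; rw [hkq] at this; rw [this]; ring
    exact Nat.eq_of_mul_eq_mul_right hq0 h2
  -- range = T
  have hrange_eq : (Finset.univ.filter (fun x => x ∈ f.range)) = T := by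
    apply Finset.eq_of_subset_of_card_le hrange_sub
    have : (Finset.univ.filter (fun x => x ∈ f.range)).card = q := by
      rw [← hrange_count, hrq]
    omega
  -- for each y, y^(q+1) ∈ range
  have hy_mem : ∀ y : F, ∃ x : F, f x = y ^ (q + 1) := by
    intro y
    have hmemT : y ^ (q + 1) ∈ T := by
      rw [hT, Finset.mem_filter]
      refine ⟨Finset.mem_univ _, ?_⟩
      rw [← pow_mul, show (q + 1) * q = q ^ 2 + q by ring, pow_add, hpow, ← pow_succ']
    have : y ^ (q + 1) ∈ Finset.univ.filter (fun x => x ∈ f.range) := hrange_eq ▸ hmemT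
    simp only [Finset.mem_filter, Finset.mem_univ, true_and, AddMonoidHom.mem_range] at this
    exact this
  -- each fiber has q elements
  have hfiber : ∀ y : F, Fintype.card {x : F // x ^ q + x = y ^ (q + 1)} = q := by
    intro y
    obtain ⟨x₀, hx₀⟩ := hy_mem y
    have e : {x : F // x ^ q + x = y ^ (q + 1)} ≃ f.ker :=
      { toFun := fun x => ⟨x.1 - x₀, by
          rw [f.mem_ker, map_sub, hx₀, hfval, x.2, sub_self]⟩
        invFun := fun k => ⟨k.1 + x₀, by
          have hk : f k.1 = 0 := (f.mem_ker).1 k.2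
          rw [← hfval, map_add, hk, hx₀, zero_add]⟩
        left_inv := fun x => by ext; simp
        right_inv := fun k => by ext; simp }
    rw [Fintype.card_congr e, ← Nat.card_eq_fintype_card, hkq]
  -- final counting
  have e1 : {t : F × F × F //
      t.1 ^ q + t.1 = t.2.1 ^ (q + 1) ∧ t.2.1 ^ q ^ 2 - t.2.1 = t.2.2 ^ m} ≃
      Σ y : F, {x : F // x ^ q + x = y ^ (q + 1)} :=
    { toFun := fun t => ⟨t.1.2.1, t.1.1, t.2.1⟩
      invFun := fun s => ⟨(s.2.1, s.1, 0), s.2.2, by rw [hpow, sub_self, zero_pow hm0]⟩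
      left_inv := fun t => by
        obtain ⟨⟨x, y, z⟩, h1, h2⟩ := t
        have hz : z = 0 := part1 x y z h1 h2
        subst hz
        rfl
      right_inv := fun s => rfl }
  rw [Nat.card_congr e1, Nat.card_eq_fintype_card, Fintype.card_sigma]
  simp only [hfiber]
  rw [Finset.sum_const, Finset.card_univ, hF, smul_eq_mul]
  ring
end

section
/- Let p be a prime, h a positive integer, q = p^h, let n ≥ 3 be an odd integer, and let m = (q^n + 1)/(q + 1), which is an integer. Let K be a field of characteristic p. Suppose (x1, y1, z1) and (x2, y2, z2) in K^3 both satisfy the equations x^q + x = y^{q+1} and y^{q^2} - y = z^m. Then the following are equivalent: (i) there exist ζ, a, b in K with ζ^{(q^n+1)(q-1)} = 1, b^{q^2} = b, a^q + a = b^{q+1}, such that x2 = ζ^{q^n+1}(x1 + b^q y1 + a), y2 = ζ^m (y1 + b), and z2 = ζ z1; (ii) there exists ζ in K with ζ^{(q^n+1)(q-1)} = 1 and z2 = ζ z1. -/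
/-- Two affine points of the curve `C_n : x^q + x = y^{q+1}, y^{q^2} - y = z^m` lie in the
same orbit under the group `Γ = Q ⋊ Σ` if and only if their `z`-coordinates differ by a
`(q^n+1)(q-1)`-th root of unity. -/
theorem stmt17 {p hexp : ℕ} (hp : p.Prime) (hh : 0 < hexp) (q : ℕ) (hq : q = p ^ hexp)
    (n : ℕ) (hn : 3 ≤ n) (hodd : Odd n) (m : ℕ) (hm : m * (q + 1) = q ^ n + 1)
    {K : Type*} [Field K] [CharP K p]
    (x1 y1 z1 x2 y2 z2 : K)
    (h1 : x1 ^ q + x1 = y1 ^ (q + 1)) (h1' : y1 ^ q ^ 2 - y1 = z1 ^ m)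
    (h2 : x2 ^ q + x2 = y2 ^ (q + 1)) (h2' : y2 ^ q ^ 2 - y2 = z2 ^ m) :
    (∃ ζ a b : K, ζ ^ ((q ^ n + 1) * (q - 1)) = 1 ∧ b ^ q ^ 2 = b ∧
        a ^ q + a = b ^ (q + 1) ∧
        x2 = ζ ^ (q ^ n + 1) * (x1 + b ^ q * y1 + a) ∧
        y2 = ζ ^ m * (y1 + b) ∧ z2 = ζ * z1) ↔
    (∃ ζ : K, ζ ^ ((q ^ n + 1) * (q - 1)) = 1 ∧ z2 = ζ * z1) := by
  constructor
  · rintro ⟨ζ, a, b, hζ, -, -, -, -, hzz⟩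
    exact ⟨ζ, hζ, hzz⟩
  · rintro ⟨ζ, hζ, hzz⟩
    haveI := Fact.mk hp
    have hq2 : 2 ≤ q := by
      have h1 : p ≤ p ^ hexp := by
        calc p = p ^ 1 := (pow_one p).symm
        _ ≤ p ^ hexp := Nat.pow_le_pow_right hp.pos hh
      have := hp.two_le
      omega
    obtain ⟨e, rfl⟩ : ∃ e, q = e + 1 := ⟨q - 1, by omega⟩
    have he1 : 1 ≤ e := by omega
    have hζe : ζ ^ (((e+1)^n + 1) * e) = 1 := by simpa using hζ
    have hζ0 : ζ ≠ 0 := by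
      intro h0
      rw [h0, zero_pow (Nat.mul_ne_zero (Nat.succ_ne_zero _) (by omega))] at hζe
      exact zero_ne_one hζe
    have Fadd : ∀ x y : K, (x + y) ^ (e+1) = x ^ (e+1) + y ^ (e+1) := fun x y => by
      rw [hq]; exact add_pow_char_pow x y p hexp
    have Fsub : ∀ x y : K, (x - y) ^ (e+1) = x ^ (e+1) - y ^ (e+1) := fun x y => by
      rw [hq]; exact sub_pow_char_pow x y hexp
    have Fsub2 : ∀ x y : K, (x - y) ^ ((e+1)^2) = x ^ ((e+1)^2) - y ^ ((e+1)^2) := fun x y => by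
      rw [pow_two, pow_mul, pow_mul, pow_mul, Fsub, Fsub]
    set u : K := ζ ^ m with hudef
    set v : K := ζ ^ ((e+1)^n + 1) with hvdef
    have hu0 : u ≠ 0 := pow_ne_zero _ hζ0
    have hv0 : v ≠ 0 := pow_ne_zero _ hζ0
    have hu : u ^ ((e+1)^2) = u := by
      rw [hudef, ← pow_mul]
      have h : m * (e+1)^2 = m + ((e+1)^n + 1) * e := by rw [← hm]; ring
      rw [h, pow_add, hζe, mul_one]
    have hv : v ^ (e+1) = v := by
      rw [hvdef, ← pow_mul]
      have h : ((e+1)^n + 1) * (e+1) = ((e+1)^n + 1) + ((e+1)^n + 1) * e := by ring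
      rw [h, pow_add, hζe, mul_one]
    have huv : u ^ (e+1+1) = v := by
      rw [hudef, hvdef, ← pow_mul, hm]
    set b : K := u⁻¹ * y2 - y1 with hbdef
    have hz2m : z2 ^ m = u * z1 ^ m := by rw [hzz, mul_pow, hudef]
    have hb : b ^ ((e+1)^2) = b := by
      rw [hbdef, Fsub2, mul_pow, inv_pow, hu, sub_eq_iff_eq_add.mp h2',
        sub_eq_iff_eq_add.mp h1', hz2m]
      field_simp
      ring
    have hy2 : y2 = u * (y1 + b) := by
      rw [hbdef]; field_simp; try ring
    set a : K := v⁻¹ * x2 - x1 - b ^ (e+1) * y1 with hadef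
    have haq : a ^ (e+1) = v⁻¹ * x2 ^ (e+1) - x1 ^ (e+1) - b * y1 ^ (e+1) := by
      rw [hadef, Fsub, Fsub, mul_pow, mul_pow, inv_pow, hv, ← pow_mul, ← pow_two, hb]
    have hy2p : y2 ^ (e+1+1) = v * ((y1 ^ (e+1) + b ^ (e+1)) * (y1 + b)) := by
      rw [hy2, mul_pow, pow_succ (y1 + b), Fadd, ← huv]
      try ring
    have ha : a ^ (e+1) + a = b ^ (e+1+1) := by
      rw [haq, hadef, eq_sub_of_add_eq h2, eq_sub_of_add_eq h1, hy2p]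
      field_simp
      try ring
    have hx : x2 = v * (x1 + b ^ (e+1) * y1 + a) := by
      rw [hadef]; field_simp; try ring
    exact ⟨ζ, a, b, hζ, hb, ha, hx, hy2, hzz⟩
end
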